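/- arXiv:1307.2323 — 7 statements merged into one kernel-verified Lean document; each statement's English description precedes it below -/
import Mathlib

section
/- Let ρ and π be density matrices on ℂ^n with ρ ≠ π and with the range (column space) of π contained in the range of ρ. Then there exists a constant k > 0 such that σ := ρ + (k / D(ρ,π))·(ρ − π) is a density matrix and rank σ < rank ρ. -/
open Matrix
open scoped ComplexOrder

/-- A density matrix on ℂ^n: positive semidefinite with trace 1. -/
def IsDensityMatrix {n : ℕ} (ρ : Matrix (Fin n) (Fin n) ℂ) : Prop :=
  ρ.PosSemidef ∧ ρ.trace = 1

/-- The trace distance between two matrices whose difference is Hermitian: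
half the sum of the absolute values of the eigenvalues of the difference. -/
noncomputable def traceDist {n : ℕ} (ρ π : Matrix (Fin n) (Fin n) ℂ) : ℝ :=
  if h : (ρ - π).IsHermitian then (1 / 2) * ∑ i, |h.eigenvalues i| else 0

namespace StmtAux

variable {n : ℕ}

open scoped MatrixOrder

lemma herm_dot_im (A : Matrix (Fin n) (Fin n) ℂ) (hA : A.IsHermitian) (v : Fin n → ℂ) :
    (star v ⬝ᵥ A *ᵥ v).im = 0 := by
  have h : (starRingEnd ℂ) (star v ⬝ᵥ A *ᵥ v) = star v ⬝ᵥ A *ᵥ v := by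
    calc (starRingEnd ℂ) (star v ⬝ᵥ A *ᵥ v) = star (star v ⬝ᵥ A *ᵥ v) := rfl
    _ = star (A *ᵥ v) ⬝ᵥ star (star v) := (star_dotProduct_star _ _).symm
    _ = (star v ᵥ* Aᴴ) ⬝ᵥ v := by rw [star_mulVec, star_star]
    _ = star v ⬝ᵥ A *ᵥ v := by rw [← dotProduct_mulVec, hA.eq]
  exact Complex.conj_eq_iff_im.mp h

lemma psd_of_re (A : Matrix (Fin n) (Fin n) ℂ) (hA : A.IsHermitian)
    (h : ∀ v, 0 ≤ (star v ⬝ᵥ A *ᵥ v).re) : A.PosSemidef := by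
  refine PosSemidef.of_dotProduct_mulVec_nonneg hA fun v => ?_
  rw [Complex.le_def]
  exact ⟨by simpa using h v, by simpa using (herm_dot_im A hA v).symm⟩

lemma psd_re_nonneg {A : Matrix (Fin n) (Fin n) ℂ} (hA : A.PosSemidef) (v : Fin n → ℂ) :
    0 ≤ (star v ⬝ᵥ A *ᵥ v).re := by
  have := hA.dotProduct_mulVec_nonneg v
  rw [Complex.le_def] at this
  simpa using this.1

lemma dot_sqrt {A : Matrix (Fin n) (Fin n) ℂ} (hA : A.PosSemidef) (v : Fin n → ℂ) :
    star v ⬝ᵥ A *ᵥ v = star (CFC.sqrt A *ᵥ v) ⬝ᵥ (CFC.sqrt A *ᵥ v) := by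
  conv_lhs => rw [← CFC.sqrt_mul_sqrt_self A hA.nonneg]
  rw [star_mulVec, ← mulVec_mulVec, ← dotProduct_mulVec, (CFC.sqrt_nonneg A).posSemidef.1.eq]

lemma re_dot_self (x : Fin n → ℂ) :
    (star x ⬝ᵥ x).re = ‖(WithLp.equiv 2 (Fin n → ℂ)).symm x‖ ^ 2 := by
  have h : inner ℂ ((WithLp.equiv 2 (Fin n → ℂ)).symm x) ((WithLp.equiv 2 (Fin n → ℂ)).symm x)
      = star x ⬝ᵥ x := by rw [dotProduct_comm]; rfl
  rw [inner_self_eq_norm_sq_to_K] at h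
  have := congrArg Complex.re h.symm
  rw [this]; norm_cast

lemma sqrt_mulVec_eq_zero {A : Matrix (Fin n) (Fin n) ℂ} (hA : A.PosSemidef) {v : Fin n → ℂ}
    (h : A *ᵥ v = 0) : CFC.sqrt A *ᵥ v = 0 := by
  have h0 : star v ⬝ᵥ A *ᵥ v = 0 := by rw [h, dotProduct_zero]
  rw [dot_sqrt hA v] at h0
  exact dotProduct_star_self_eq_zero.mp h0

lemma dominate {M N : Matrix (Fin n) (Fin n) ℂ} (hM : M.PosSemidef) (hN : N.PosSemidef)
    (hker : ∀ v, M *ᵥ v = 0 → N *ᵥ v = 0) :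
    ∃ c : ℝ, 0 < c ∧ ∀ v, (star v ⬝ᵥ N *ᵥ v).re ≤ c * (star v ⬝ᵥ M *ᵥ v).re := by
  classical
  set S := CFC.sqrt M with hS
  set T := CFC.sqrt N with hT
  let f : EuclideanSpace ℂ (Fin n) →ₗ[ℂ] EuclideanSpace ℂ (Fin n) := toEuclideanLin S
  let g : EuclideanSpace ℂ (Fin n) →ₗ[ℂ] EuclideanSpace ℂ (Fin n) := toEuclideanLin T
  have hfg : LinearMap.ker f ≤ LinearMap.ker g := by
    intro x hx
    rw [LinearMap.mem_ker] at hx ⊢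
    have hx' : S *ᵥ (WithLp.equiv 2 (Fin n → ℂ)) x = 0 := by
      have := congrArg (WithLp.equiv 2 (Fin n → ℂ)) hx
      simpa [f, toEuclideanLin_apply] using this
    have hMx : M *ᵥ (WithLp.equiv 2 (Fin n → ℂ)) x = 0 := by
      rw [← CFC.sqrt_mul_sqrt_self M hM.nonneg, ← mulVec_mulVec, hx', mulVec_zero]
    have hNx := hker _ hMx
    have hTx : T *ᵥ (WithLp.equiv 2 (Fin n → ℂ)) x = 0 := sqrt_mulVec_eq_zero hN hNx
    apply (WithLp.equiv 2 (Fin n → ℂ)).injective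
    simpa [g, toEuclideanLin_apply] using hTx
  set p := LinearMap.ker f with hp
  have hg' : p ≤ LinearMap.ker g := hfg
  let g' := p.liftQ g hg'
  let f' := p.liftQ f le_rfl
  have hf'inj : LinearMap.ker f' = ⊥ := Submodule.ker_liftQ_eq_bot _ _ _ le_rfl
  obtain ⟨li, hli⟩ := f'.exists_leftInverse_of_injective hf'inj
  let X := (g'.comp li).toContinuousLinearMap
  have hgX : ∀ x, g x = X (f x) := by
    intro x
    have h1 : f' (p.mkQ x) = f x := rfl
    have h2 : li (f' (p.mkQ x)) = p.mkQ x := by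
      have := LinearMap.congr_fun hli (p.mkQ x)
      simpa using this
    calc g x = g' (p.mkQ x) := rfl
    _ = g' (li (f' (p.mkQ x))) := by rw [h2]
    _ = X (f x) := by rw [h1]; rfl
  refine ⟨‖X‖ ^ 2 + 1, by positivity, fun v => ?_⟩
  set v' : EuclideanSpace ℂ (Fin n) := (WithLp.equiv 2 (Fin n → ℂ)).symm v with hv'
  have hfv : f v' = (WithLp.equiv 2 (Fin n → ℂ)).symm (S *ᵥ v) := by
    simp [f, toEuclideanLin_apply, hv']
  have hgv : g v' = (WithLp.equiv 2 (Fin n → ℂ)).symm (T *ᵥ v) := by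
    simp [g, toEuclideanLin_apply, hv']
  have hNre : (star v ⬝ᵥ N *ᵥ v).re = ‖g v'‖ ^ 2 := by
    rw [dot_sqrt hN, re_dot_self, hgv]
  have hMre : (star v ⬝ᵥ M *ᵥ v).re = ‖f v'‖ ^ 2 := by
    rw [dot_sqrt hM, re_dot_self, hfv]
  rw [hNre, hMre]
  have h1 : ‖g v'‖ ≤ ‖X‖ * ‖f v'‖ := by
    rw [hgX v']
    exact X.le_opNorm _
  calc ‖g v'‖ ^ 2 ≤ (‖X‖ * ‖f v'‖) ^ 2 := by
        apply pow_le_pow_left₀ (norm_nonneg _) h1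
  _ = ‖X‖ ^ 2 * ‖f v'‖ ^ 2 := by ring
  _ ≤ (‖X‖ ^ 2 + 1) * ‖f v'‖ ^ 2 := by nlinarith [sq_nonneg (‖f v'‖), norm_nonneg (f v')]

lemma eq_zero_of_eigenvalues {A : Matrix (Fin n) (Fin n) ℂ} (hA : A.IsHermitian)
    (h : ∀ i, hA.eigenvalues i = 0) : A = 0 := by
  have h0 : hA.eigenvalues = 0 := funext h
  have hst := hA.spectral_theorem
  rwa [h0, Pi.comp_zero, RCLike.ofReal_zero,
    (by rfl : Function.const (Fin n) (0 : ℂ) = fun _ => 0), diagonal_zero,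
    map_zero] at hst

lemma trace_eq_sum_eigenvalues {A : Matrix (Fin n) (Fin n) ℂ} (hA : A.IsHermitian) :
    A.trace = ∑ i, (hA.eigenvalues i : ℂ) := by
  conv_lhs => rw [hA.spectral_theorem]
  rw [Unitary.conjStarAlgAut_apply, Matrix.trace_mul_comm, ← mul_assoc]
  rw [Unitary.coe_star_mul_self, one_mul, trace_diagonal]
  simp [Function.comp]

end StmtAux

open StmtAux in
theorem stmt_2 {n : ℕ} (ρ π : Matrix (Fin n) (Fin n) ℂ)
    (hρ : IsDensityMatrix ρ) (hπ : IsDensityMatrix π) (hne : ρ ≠ π)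
    (hrange : LinearMap.range π.mulVecLin ≤ LinearMap.range ρ.mulVecLin) :
    ∃ k : ℝ, 0 < k ∧
      IsDensityMatrix (ρ + ((k / traceDist ρ π : ℝ) : ℂ) • (ρ - π)) ∧
      (ρ + ((k / traceDist ρ π : ℝ) : ℂ) • (ρ - π)).rank < ρ.rank := by
  classical
  obtain ⟨hρp, hρtr⟩ := hρ
  obtain ⟨hπp, hπtr⟩ := hπ
  have hρh : ρ.IsHermitian := hρp.1
  have hΔh : (ρ - π).IsHermitian := hρh.sub hπp.1
  have hΔne : ρ - π ≠ 0 := sub_ne_zero.mpr hne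
  -- trace distance is positive
  have hD : 0 < traceDist ρ π := by
    rw [traceDist, dif_pos hΔh]
    have hex : ∃ i, hΔh.eigenvalues i ≠ 0 := by
      by_contra hcon
      push_neg at hcon
      exact hΔne (eq_zero_of_eigenvalues hΔh hcon)
    obtain ⟨i, hi⟩ := hex
    refine mul_pos (by norm_num) ?_
    exact Finset.sum_pos' (fun j _ => abs_nonneg _) ⟨i, Finset.mem_univ i, abs_pos.mpr hi⟩
  -- kernel containment: ker ρ ⊆ ker π
  have hkerπ : ∀ v, ρ *ᵥ v = 0 → π *ᵥ v = 0 := by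
    intro v hv
    obtain ⟨u, hu⟩ := hrange (LinearMap.mem_range_self π.mulVecLin v)
    simp only [mulVecLin_apply] at hu
    have h0 : star v ⬝ᵥ π *ᵥ v = 0 := by
      rw [show π *ᵥ v = ρ *ᵥ u from hu.symm]
      rw [dotProduct_mulVec]
      have hz : star v ᵥ* ρ = 0 := by
        have := congrArg star hv
        rw [star_mulVec, hρh.eq] at this
        simpa using this
      rw [hz, zero_dotProduct]
    exact (hπp.dotProduct_mulVec_zero_iff v).mp h0
  -- the family σ t
  set σ : ℝ → Matrix (Fin n) (Fin n) ℂ := fun t => ρ + (t : ℂ) • (ρ - π) with hσdef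
  have hσherm : ∀ t, (σ t).IsHermitian := by
    intro t
    unfold σ
    unfold Matrix.IsHermitian
    rw [conjTranspose_add, conjTranspose_smul, hρh.eq, hΔh.eq, Complex.star_def,
      Complex.conj_ofReal]
  have hqΔ : ∀ v : Fin n → ℂ, (star v ⬝ᵥ (ρ - π) *ᵥ v).re
      = (star v ⬝ᵥ ρ *ᵥ v).re - (star v ⬝ᵥ π *ᵥ v).re := by
    intro v
    rw [sub_mulVec, dotProduct_sub, Complex.sub_re]
  have hq : ∀ (t : ℝ) (v : Fin n → ℂ), (star v ⬝ᵥ (σ t) *ᵥ v).re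
      = (star v ⬝ᵥ ρ *ᵥ v).re + t * (star v ⬝ᵥ (ρ - π) *ᵥ v).re := by
    intro t v
    unfold σ
    rw [add_mulVec, dotProduct_add, Complex.add_re, smul_mulVec, dotProduct_smul,
      smul_eq_mul, Complex.re_ofReal_mul]
  -- the feasible set
  set S : Set ℝ := {t : ℝ | 0 ≤ t ∧ ∀ v, 0 ≤ (star v ⬝ᵥ (σ t) *ᵥ v).re} with hSdef
  have h0S : (0 : ℝ) ∈ S := by
    refine ⟨le_refl 0, fun v => ?_⟩
    rw [hq]
    simpa using psd_re_nonneg hρp v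
  have hSclosed : IsClosed S := by
    have : S = {t : ℝ | 0 ≤ t} ∩
        ⋂ v : Fin n → ℂ, {t : ℝ | 0 ≤ (star v ⬝ᵥ ρ *ᵥ v).re + t * (star v ⬝ᵥ (ρ - π) *ᵥ v).re} := by
      ext t
      simp only [hSdef, Set.mem_setOf_eq, Set.mem_inter_iff, Set.mem_iInter]
      constructor
      · rintro ⟨h1, h2⟩
        exact ⟨h1, fun v => by rw [← hq]; exact h2 v⟩
      · rintro ⟨h1, h2⟩
        exact ⟨h1, fun v => by rw [hq]; exact h2 v⟩
    rw [this]
    refine IsClosed.inter isClosed_Ici (isClosed_iInter fun v => ?_)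
    exact isClosed_le continuous_const (continuous_const.add (continuous_id.mul continuous_const))
  -- S is bounded above
  have hwneg : ∃ w, (star w ⬝ᵥ (ρ - π) *ᵥ w).re < 0 := by
    by_contra hcon
    push_neg at hcon
    have hΔpsd : (ρ - π).PosSemidef := psd_of_re _ hΔh hcon
    have htr0 : (ρ - π).trace = 0 := by rw [trace_sub, hρtr, hπtr, sub_self]
    rw [trace_eq_sum_eigenvalues hΔh] at htr0
    have hsum : ∑ i, hΔh.eigenvalues i = 0 := by
      have := congrArg Complex.re htr0
      simpa using this
    have hzero : ∀ i ∈ Finset.univ, hΔh.eigenvalues i = 0 := by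
      rw [← Finset.sum_eq_zero_iff_of_nonneg (fun i _ => hΔpsd.eigenvalues_nonneg i)]
      exact hsum
    exact hΔne (eq_zero_of_eigenvalues hΔh (fun i => hzero i (Finset.mem_univ i)))
  obtain ⟨w, hw⟩ := hwneg
  have hbdd : BddAbove S := by
    refine ⟨(star w ⬝ᵥ ρ *ᵥ w).re / (-(star w ⬝ᵥ (ρ - π) *ᵥ w).re), ?_⟩
    rintro t ⟨ht0, ht⟩
    have := ht w
    rw [hq] at this
    rw [le_div_iff₀ (by linarith)]
    nlinarith
  -- get strictly positive element of S
  obtain ⟨c, hc0, hc⟩ := dominate hρp hπp hkerπ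
  have ht₀S : (1 / c) ∈ S := by
    refine ⟨by positivity, fun v => ?_⟩
    rw [hq, hqΔ]
    have h1 := hc v
    have h2 := psd_re_nonneg hρp v
    have h3 := psd_re_nonneg hπp v
    have hcc : c * (1 / c) = 1 := by field_simp
    nlinarith
  -- the supremum
  set t₁ : ℝ := sSup S with ht₁def
  have ht₁S : t₁ ∈ S := hSclosed.csSup_mem ⟨0, h0S⟩ hbdd
  have ht₁pos : 0 < t₁ := lt_of_lt_of_le (by positivity) (le_csSup hbdd ht₀S)
  have hσpsd : (σ t₁).PosSemidef := psd_of_re _ (hσherm t₁) ht₁S.2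
  -- extra kernel vector at t₁
  have hextra : ∃ v, (σ t₁) *ᵥ v = 0 ∧ ρ *ᵥ v ≠ 0 := by
    by_contra hcon
    push_neg at hcon
    have hkerσπ : ∀ v, (σ t₁) *ᵥ v = 0 → π *ᵥ v = 0 := fun v hv => hkerπ v (hcon v hv)
    obtain ⟨c', hc'0, hc'⟩ := dominate hσpsd hπp hkerσπ
    have hmem : t₁ + 1 / c' ∈ S := by
      refine ⟨by positivity, fun v => ?_⟩
      have hs := ht₁S.2 v
      rw [hq] at hs ⊢
      have hp := hc' v
      rw [hq] at hp
      have h2 := psd_re_nonneg hρp v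
      have h3 := psd_re_nonneg hπp v
      have hcc : c' * (1 / c') = 1 := by field_simp
      rw [hqΔ] at hs ⊢
      rw [hqΔ] at hp
      nlinarith
    have := le_csSup hbdd hmem
    have : (0:ℝ) < 1 / c' := by positivity
    linarith [le_csSup hbdd hmem]
  obtain ⟨v₀, hv₀σ, hv₀ρ⟩ := hextra
  -- kernel of ρ is contained in kernel of σ t
  have hkerσ : ∀ v, ρ *ᵥ v = 0 → (σ t₁) *ᵥ v = 0 := by
    intro v hv
    unfold σ
    rw [add_mulVec, smul_mulVec, sub_mulVec, hv, hkerπ v hv, sub_zero, smul_zero, add_zero]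
  -- rank inequality
  have hklt : LinearMap.ker ρ.mulVecLin < LinearMap.ker (σ t₁).mulVecLin := by
    rw [SetLike.lt_iff_le_and_exists]
    constructor
    · intro v hv
      rw [LinearMap.mem_ker, mulVecLin_apply] at hv ⊢
      exact hkerσ v hv
    · exact ⟨v₀, by rw [LinearMap.mem_ker, mulVecLin_apply]; exact hv₀σ,
        by rw [LinearMap.mem_ker, mulVecLin_apply]; exact hv₀ρ⟩
  have hfr : Module.finrank ℂ (LinearMap.ker ρ.mulVecLin)
      < Module.finrank ℂ (LinearMap.ker (σ t₁).mulVecLin) :=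
    Submodule.finrank_lt_finrank_of_lt hklt
  have hr700 := LinearMap.finrank_range_add_finrank_ker (σ t₁).mulVecLin
  have hrρ := LinearMap.finrank_range_add_finrank_ker ρ.mulVecLin
  have hrank : (σ t₁).rank < ρ.rank := by
    have e1 : (σ t₁).rank = Module.finrank ℂ (LinearMap.range (σ t₁).mulVecLin) := rfl
    have e2 : ρ.rank = Module.finrank ℂ (LinearMap.range ρ.mulVecLin) := rfl
    rw [e1, e2]
    omega
  -- trace of σ t₁
  have htrσ : (σ t₁).trace = 1 := by
    unfold σ
    rw [trace_add, trace_smul, trace_sub, hρtr, hπtr, sub_self, smul_zero, add_zero]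
  -- package up
  refine ⟨t₁ * traceDist ρ π, mul_pos ht₁pos hD, ?_⟩
  have hkey : (t₁ * traceDist ρ π) / traceDist ρ π = t₁ := by
    field_simp
  rw [hkey]
  exact ⟨⟨hσpsd, htrσ⟩, hrank⟩
end

section
/- Let ρ and π be density matrices on ℂ^n with ρ ≠ π and with the range of π contained in the range of ρ, and let λ_min(ρ) denote the smallest nonzero eigenvalue of ρ. Then the matrix σ := ρ + (λ_min(ρ) / D(ρ,π))·(ρ − π) is positive semidefinite with trace 1, hence a density matrix. -/
open Matrix
open scoped ComplexOrder

/-- The smallest nonzero eigenvalue of a Hermitian matrix. -/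
noncomputable def lambdaMin {n : ℕ} (ρ : Matrix (Fin n) (Fin n) ℂ) : ℝ :=
  if h : ρ.IsHermitian then sInf {x : ℝ | (∃ i, h.eigenvalues i = x) ∧ x ≠ 0} else 0

/-- Conjugating a quadratic form. -/
lemma quad_conj {n : ℕ} (U M : Matrix (Fin n) (Fin n) ℂ) (v w : Fin n → ℂ) :
    star (U *ᵥ v) ⬝ᵥ M *ᵥ (U *ᵥ w) = star v ⬝ᵥ (Uᴴ * M * U) *ᵥ w := by
  rw [star_mulVec, mulVec_mulVec, dotProduct_mulVec, dotProduct_mulVec,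
    vecMul_vecMul, mul_assoc]

/-- The quadratic form of a Hermitian matrix is real. -/
lemma herm_quad_real {n : ℕ} {M : Matrix (Fin n) (Fin n) ℂ} (hM : M.IsHermitian)
    (v : Fin n → ℂ) :
    star v ⬝ᵥ M *ᵥ v = (((star v ⬝ᵥ M *ᵥ v : ℂ).re : ℝ) : ℂ) := by
  rw [eq_comm, ← Complex.conj_eq_iff_re]
  have h1 : star (star v ⬝ᵥ M *ᵥ v) = star v ⬝ᵥ M *ᵥ v := by
    conv_lhs => rw [star_dotProduct, star_star, star_mulVec, hM.eq]
    rw [← dotProduct_mulVec]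
  exact h1

theorem stmt_4 {n : ℕ} (ρ π : Matrix (Fin n) (Fin n) ℂ)
    (hρ : IsDensityMatrix ρ) (hπ : IsDensityMatrix π) (hne : ρ ≠ π)
    (hrange : LinearMap.range π.mulVecLin ≤ LinearMap.range ρ.mulVecLin) :
    (ρ + ((lambdaMin ρ / traceDist ρ π : ℝ) : ℂ) • (ρ - π)).PosSemidef ∧
    (ρ + ((lambdaMin ρ / traceDist ρ π : ℝ) : ℂ) • (ρ - π)).trace = 1 := by
  obtain ⟨hρP, hρt⟩ := hρ
  obtain ⟨hπP, hπt⟩ := hπ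
  have hρH : ρ.IsHermitian := hρP.1
  have hπH : π.IsHermitian := hπP.1
  have hH : (ρ - π).IsHermitian := hρH.sub hπH
  set μ : Fin n → ℝ := hH.eigenvalues with hμ
  set lam : Fin n → ℝ := hρH.eigenvalues with hlam
  have hD : traceDist ρ π = (1 / 2) * ∑ i, |μ i| := by
    rw [traceDist, dif_pos hH]
  have hL : lambdaMin ρ = sInf {x : ℝ | (∃ i, lam i = x) ∧ x ≠ 0} := by
    rw [lambdaMin, dif_pos hρH]
  -- spectral data for ρ - π
  set V : Matrix (Fin n) (Fin n) ℂ := ↑hH.eigenvectorUnitary with hVdef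
  have hVs : star V * V = 1 := Unitary.coe_star_mul_self _
  have hVss : V * star V = 1 := Unitary.coe_mul_star_self _
  have hspec : ρ - π = V * diagonal (RCLike.ofReal ∘ μ) * star V := hH.spectral_theorem
  -- some eigenvalue of ρ - π is nonzero
  have hμne : ∃ i, μ i ≠ 0 := by
    by_contra h
    push_neg at h
    apply hne
    rw [← sub_eq_zero]
    rw [hspec]
    have h0 : (RCLike.ofReal ∘ μ : Fin n → ℂ) = fun _ => 0 := funext fun i => by
      simp [h i]
    rw [h0, diagonal_zero, mul_zero, zero_mul]
  obtain ⟨i₀, hi₀⟩ := hμne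
  have hDpos : 0 < traceDist ρ π := by
    rw [hD]
    have h1 : |μ i₀| ≤ ∑ i, |μ i| :=
      Finset.single_le_sum (f := fun i => |μ i|) (fun i _ => abs_nonneg _) (Finset.mem_univ i₀)
    have h2 : 0 < |μ i₀| := abs_pos.mpr hi₀
    linarith
  -- lambdaMin is positive
  set S : Set ℝ := {x : ℝ | (∃ i, lam i = x) ∧ x ≠ 0} with hSdef
  have hSfin : S.Finite := (Set.finite_range lam).subset fun x hx => hx.1
  have hSne : S.Nonempty := by
    have hρne : ρ ≠ 0 := by
      intro h
      rw [h] at hρt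
      simp at hρt
    by_contra h
    rw [Set.not_nonempty_iff_eq_empty] at h
    have hall : ∀ i, lam i = 0 := by
      intro i
      by_contra hne'
      have : lam i ∈ S := ⟨⟨i, rfl⟩, hne'⟩
      rw [h] at this
      exact this
    apply hρne
    rw [hρH.spectral_theorem]
    have h0 : (RCLike.ofReal ∘ lam : Fin n → ℂ) = fun _ => 0 := funext fun i => by
      simp [hall i]
    rw [h0, diagonal_zero, map_zero]
  have hLmem : lambdaMin ρ ∈ S := by
    rw [hL]
    exact hSne.csInf_mem hSfin
  have hLpos : 0 < lambdaMin ρ := by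
    obtain ⟨⟨i, hi⟩, hne'⟩ := hLmem
    have h0 : 0 ≤ lambdaMin ρ := by
      rw [← hi]
      exact hρP.eigenvalues_nonneg i
    exact lt_of_le_of_ne h0 (Ne.symm hne')
  -- eigenvalues of ρ - π sum to zero
  have hμsum : ∑ i, μ i = 0 := by
    have h1 : (ρ - π).trace = 0 := by
      rw [trace_sub, hρt, hπt, sub_self]
    have h2 : (ρ - π).trace = ∑ i, (μ i : ℂ) := by
      rw [hspec, trace_mul_cycle, hVs, one_mul, trace_diagonal]
      simp
    rw [h1] at h2
    have h3 : ((∑ i, μ i : ℝ) : ℂ) = 0 := by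
      push_cast
      exact h2.symm
    exact_mod_cast h3
  set Dr : ℝ := traceDist ρ π with hDr
  -- each eigenvalue of ρ - π is at least -Dr
  have hμbound : ∀ i, 0 ≤ μ i + Dr := by
    intro i
    have h1 : ∑ j ∈ Finset.univ.erase i, μ j + μ i = ∑ j, μ j :=
      Finset.sum_erase_add _ _ (Finset.mem_univ i)
    have h2 : |∑ j ∈ Finset.univ.erase i, μ j| ≤ ∑ j ∈ Finset.univ.erase i, |μ j| :=
      Finset.abs_sum_le_sum_abs _ _
    have h3 : ∑ j ∈ Finset.univ.erase i, |μ j| + |μ i| = ∑ j, |μ j| :=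
      Finset.sum_erase_add _ _ (Finset.mem_univ i)
    have h4 : ∑ j ∈ Finset.univ.erase i, μ j = -μ i := by
      rw [hμsum] at h1
      linarith
    rw [h4] at h2
    rw [abs_neg] at h2
    have h5 : Dr = (1 / 2) * ∑ j, |μ j| := hD
    have h6 : -μ i ≤ |μ i| := neg_le_abs _
    rcases abs_cases (μ i) with ⟨ha, _⟩ | ⟨ha, _⟩ <;> linarith
  -- (ρ - π) + Dr • 1 is positive semidefinite
  have hPSD2 : ((ρ - π) + ((Dr : ℝ) : ℂ) • 1).PosSemidef := by
    have h1 : (ρ - π) + ((Dr : ℝ) : ℂ) • (1 : Matrix (Fin n) (Fin n) ℂ) =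
        V * diagonal (fun i => ((μ i + Dr : ℝ) : ℂ)) * star V := by
      have h2 : ((Dr : ℝ) : ℂ) • (1 : Matrix (Fin n) (Fin n) ℂ) =
          V * (((Dr : ℝ) : ℂ) • 1) * star V := by
        rw [Matrix.mul_smul, mul_one, Matrix.smul_mul, hVss]
      rw [hspec, h2, ← add_mul, ← mul_add]
      congr 2
      rw [smul_one_eq_diagonal, diagonal_add]
      funext i
      push_cast
      simp
    rw [h1, Matrix.star_eq_conjTranspose]
    apply Matrix.PosSemidef.mul_mul_conjTranspose_same
    rw [posSemidef_diagonal_iff]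
    intro i
    rw [Complex.zero_le_real]
    exact hμbound i
  set c : ℝ := lambdaMin ρ / Dr with hc
  have hcnn : 0 ≤ c := div_nonneg hLpos.le hDpos.le
  have hcD : c * Dr = lambdaMin ρ := div_mul_cancel₀ _ hDpos.ne'
  set σ : Matrix (Fin n) (Fin n) ℂ := ρ + ((c : ℝ) : ℂ) • (ρ - π) with hσdef
  have hσH : σ.IsHermitian := by
    rw [hσdef, Matrix.IsHermitian, conjTranspose_add, conjTranspose_smul, hρH.eq, hH.eq,
      Complex.star_def, Complex.conj_ofReal]
  constructor
  · refine .of_dotProduct_mulVec_nonneg hσH fun x => ?_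
    -- spectral data for ρ
    set U : Matrix (Fin n) (Fin n) ℂ := ↑hρH.eigenvectorUnitary with hUdef
    have hUs : star U * U = 1 := Unitary.coe_star_mul_self _
    have hUss : U * star U = 1 := Unitary.coe_mul_star_self _
    have hspecρ : ρ = U * diagonal (RCLike.ofReal ∘ lam) * star U := hρH.spectral_theorem
    set y : Fin n → ℂ := star U *ᵥ x with hy
    set y₁ : Fin n → ℂ := fun i => if lam i = 0 then 0 else y i with hy₁
    set x₁ : Fin n → ℂ := U *ᵥ y₁ with hx₁
    set x₀ : Fin n → ℂ := x - x₁ with hx₀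
    have hxy : x = U *ᵥ y := by
      rw [hy, mulVec_mulVec, hUss, one_mulVec]
    have hkey : ∀ v : Fin n → ℂ,
        ρ *ᵥ (U *ᵥ v) = U *ᵥ (diagonal (RCLike.ofReal ∘ lam) *ᵥ v) := by
      intro v
      conv_lhs => rw [hspecρ]
      rw [mulVec_mulVec, mul_assoc (U * diagonal (RCLike.ofReal ∘ lam)) (star U) U, hUs,
        mul_one, ← mulVec_mulVec]
    have hdiag : diagonal (RCLike.ofReal ∘ lam) *ᵥ y₁ = diagonal (RCLike.ofReal ∘ lam) *ᵥ y := by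
      funext i
      rw [mulVec_diagonal, mulVec_diagonal]
      by_cases h : lam i = 0
      · simp [hy₁, h]
      · simp [hy₁, h]
    have hρx₀ : ρ *ᵥ x₀ = 0 := by
      rw [hx₀, mulVec_sub]
      conv_lhs => rw [hxy, hx₁, hkey, hkey, hdiag]
      exact sub_self _
    have hπx₀ : π *ᵥ x₀ = 0 := by
      obtain ⟨u, hu⟩ := hrange (LinearMap.mem_range_self π.mulVecLin x₀)
      rw [← (hπP.dotProduct_mulVec_zero_iff x₀)]
      have h1 : π *ᵥ x₀ = ρ *ᵥ u := by
        rw [← Matrix.mulVecLin_apply, ← hu, Matrix.mulVecLin_apply]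
      rw [h1, dotProduct_mulVec]
      have h2 : star x₀ ᵥ* ρ = 0 := by
        rw [← hρH.eq, ← star_mulVec, hρx₀, star_zero]
      rw [h2, zero_dotProduct]
    have hσx₀ : σ *ᵥ x₀ = 0 := by
      rw [hσdef, add_mulVec, smul_mulVec, sub_mulVec, hρx₀, hπx₀]
      simp
    have hxsplit : x = x₀ + x₁ := by
      rw [hx₀, sub_add_cancel]
    have hred : star x ⬝ᵥ σ *ᵥ x = star x₁ ⬝ᵥ σ *ᵥ x₁ := by
      calc star x ⬝ᵥ σ *ᵥ x = star x ⬝ᵥ σ *ᵥ (x₀ + x₁) := by rw [← hxsplit]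
      _ = star x ⬝ᵥ (σ *ᵥ x₀ + σ *ᵥ x₁) := by rw [mulVec_add]
      _ = star x ⬝ᵥ σ *ᵥ x₁ := by rw [hσx₀, zero_add]
      _ = star (x₀ + x₁) ⬝ᵥ σ *ᵥ x₁ := by rw [← hxsplit]
      _ = star x₀ ⬝ᵥ σ *ᵥ x₁ + star x₁ ⬝ᵥ σ *ᵥ x₁ := by
          rw [star_add, add_dotProduct]
      _ = star x₁ ⬝ᵥ σ *ᵥ x₁ := by
          have h3 : star x₀ ᵥ* σ = 0 := by
            rw [← hσH.eq, ← star_mulVec, hσx₀, star_zero]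
          rw [dotProduct_mulVec, h3, zero_dotProduct, zero_add]
    rw [hred]
    -- now compute the three quantities
    set T : ℝ := ∑ i, Complex.normSq (y₁ i) with hT
    have hTnn : 0 ≤ T := Finset.sum_nonneg fun i _ => Complex.normSq_nonneg _
    set A : ℝ := ∑ i, lam i * Complex.normSq (y₁ i) with hA
    have ht : star x₁ ⬝ᵥ x₁ = ((T : ℝ) : ℂ) := by
      rw [hx₁, star_mulVec, dotProduct_mulVec, vecMul_vecMul, ← Matrix.star_eq_conjTranspose,
        hUs, vecMul_one, hT]
      push_cast
      rw [dotProduct]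
      refine Finset.sum_congr rfl fun i _ => ?_
      rw [Pi.star_apply, Complex.star_def, ← Complex.normSq_eq_conj_mul_self]
    have ha : star x₁ ⬝ᵥ ρ *ᵥ x₁ = ((A : ℝ) : ℂ) := by
      have hsd : star U * ρ * U = diagonal (RCLike.ofReal ∘ lam) := by
        conv_lhs => rw [hspecρ]
        simp only [Matrix.mul_assoc, hUs, Matrix.mul_one]
        rw [← Matrix.mul_assoc, hUs, Matrix.one_mul]
      rw [hx₁, quad_conj, ← Matrix.star_eq_conjTranspose, hsd, hA]
      push_cast
      rw [dotProduct]
      refine Finset.sum_congr rfl fun i _ => ?_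
      rw [Pi.star_apply, mulVec_diagonal]
      have : (starRingEnd ℂ) (y₁ i) * (y₁ i) = ((Complex.normSq (y₁ i) : ℝ) : ℂ) :=
        (Complex.normSq_eq_conj_mul_self).symm
      calc (starRingEnd ℂ) (y₁ i) * ((RCLike.ofReal ∘ lam) i * y₁ i)
          = ((lam i : ℝ) : ℂ) * ((starRingEnd ℂ) (y₁ i) * y₁ i) := by
            simp [Function.comp]; ring
      _ = (lam i : ℂ) * ((Complex.normSq (y₁ i) : ℝ) : ℂ) := by rw [this]
    have hAT : lambdaMin ρ * T ≤ A := by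
      rw [hA, hT, Finset.mul_sum]
      apply Finset.sum_le_sum
      intro i _
      by_cases h : lam i = 0
      · simp [hy₁, h]
      · have hle : lambdaMin ρ ≤ lam i := by
          rw [hL]
          exact csInf_le hSfin.bddBelow ⟨⟨i, rfl⟩, h⟩
        exact mul_le_mul_of_nonneg_right hle (Complex.normSq_nonneg _)
    have hb := herm_quad_real hH x₁
    set B : ℝ := (star x₁ ⬝ᵥ (ρ - π) *ᵥ x₁ : ℂ).re with hBdef
    have hBge : -(Dr * T) ≤ B := by
      have h0 := hPSD2.dotProduct_mulVec_nonneg x₁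
      have h1 : star x₁ ⬝ᵥ ((ρ - π) + ((Dr : ℝ) : ℂ) • 1) *ᵥ x₁ =
          ((B + Dr * T : ℝ) : ℂ) := by
        rw [add_mulVec, dotProduct_add, smul_mulVec, one_mulVec, dotProduct_smul, ht, hb]
        push_cast
        rw [smul_eq_mul]
      rw [h1] at h0
      rw [Complex.zero_le_real] at h0
      linarith
    have hfinal : star x₁ ⬝ᵥ σ *ᵥ x₁ = ((A + c * B : ℝ) : ℂ) := by
      rw [hσdef, add_mulVec, dotProduct_add, smul_mulVec, dotProduct_smul, ha, hb,
        smul_eq_mul]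
      push_cast
      ring
    rw [hfinal, Complex.zero_le_real]
    have hcB : c * (-(Dr * T)) ≤ c * B := mul_le_mul_of_nonneg_left hBge hcnn
    have : c * (Dr * T) = lambdaMin ρ * T := by
      rw [← mul_assoc, hcD]
    nlinarith
  · rw [hσdef] at *
    rw [trace_add, trace_smul, trace_sub, hρt, hπt, sub_self, smul_zero, add_zero]
end

section
/- Let ρ and π be density matrices on ℂ^n with ρ ≠ π and with the range of π contained in the range of ρ. Suppose p > 0 is such that σ := ρ + p·(ρ − π) is positive semidefinite but ρ + q·(ρ − π) is not positive semidefinite for every q > p. Then the range of π is not contained in the range of σ, the range of σ is strictly contained in the range of ρ, and rank σ < rank ρ. -/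
open Matrix
open scoped ComplexOrder

section Aux

open Finset

variable {n : ℕ}


lemma diag_quad_re (μ : Fin n → ℝ) (x : Fin n → ℂ) :
    (star x ⬝ᵥ ((diagonal (fun i => (μ i : ℂ))) *ᵥ x)).re
      = ∑ i, μ i * (‖x i‖)^2 := by
  have h : star x ⬝ᵥ ((diagonal (fun i => (μ i : ℂ))) *ᵥ x)
      = ∑ i, ((μ i * (‖x i‖)^2 : ℝ) : ℂ) := by
    simp only [dotProduct, mulVec_diagonal, Pi.star_apply, RCLike.star_def]
    refine Finset.sum_congr rfl fun i _ => ?_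
    rw [show (starRingEnd ℂ) (x i) * ((μ i : ℂ) * x i)
        = (μ i : ℂ) * (x i * (starRingEnd ℂ) (x i)) from by ring,
      Complex.mul_conj, Complex.sq_norm]
    push_cast
    ring
  rw [h, Complex.re_sum]
  exact Finset.sum_congr rfl fun i _ => Complex.ofReal_re _

lemma herm_quad_im {M : Matrix (Fin n) (Fin n) ℂ} (hM : M.IsHermitian)
    (x : Fin n → ℂ) : (star x ⬝ᵥ (M *ᵥ x)).im = 0 := by
  rw [← Complex.conj_eq_iff_im]
  calc (starRingEnd ℂ) (star x ⬝ᵥ (M *ᵥ x)) = star (star x ⬝ᵥ (M *ᵥ x)) := rfl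
    _ = star (M *ᵥ x) ⬝ᵥ x := by rw [star_dotProduct, star_star]
    _ = (star x ᵥ* Mᴴ) ⬝ᵥ x := by rw [star_mulVec]
    _ = star x ⬝ᵥ (Mᴴ *ᵥ x) := (dotProduct_mulVec _ _ _).symm
    _ = star x ⬝ᵥ (M *ᵥ x) := by rw [hM.eq]

lemma posSemidef_of_re_nonneg {M : Matrix (Fin n) (Fin n) ℂ} (hM : M.IsHermitian)
    (h : ∀ x, 0 ≤ (star x ⬝ᵥ (M *ᵥ x)).re) : M.PosSemidef := by
  refine .of_dotProduct_mulVec_nonneg hM fun x => ?_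
  rw [Complex.le_def]
  exact ⟨by simpa using h x, (herm_quad_im hM x).symm⟩

lemma diag_core (μ : Fin n → ℝ) (hμ : ∀ i, 0 ≤ μ i)
    (B : Matrix (Fin n) (Fin n) ℂ) (hB : B.IsHermitian)
    (hz : ∀ i j, (μ i = 0 ∨ μ j = 0) → B i j = 0) :
    ∃ ε : ℝ, 0 < ε ∧ (diagonal (fun i => (μ i : ℂ)) + (ε : ℂ) • B).PosSemidef := by
  have hDh : (diagonal (fun i => (μ i : ℂ))).IsHermitian :=
    isHermitian_diagonal_of_self_adjoint _ (funext fun i => Complex.conj_ofReal _)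
  by_cases hS : ∃ i, 0 < μ i
  case neg =>
    -- all eigenvalues zero hence B = 0
    have hB0 : B = 0 := by
      ext i j
      exact hz i j (Or.inl (le_antisymm (not_lt.1 fun h => hS ⟨i, h⟩) (hμ i)))
    refine ⟨1, one_pos, ?_⟩
    rw [hB0, smul_zero, add_zero]
    exact posSemidef_diagonal_iff.mpr fun i => by
      simpa using Complex.zero_le_real.mpr (hμ i)
  case pos =>
    obtain ⟨i₀, hi₀⟩ := hS
    set S : Finset (Fin n) := Finset.univ.filter (fun i => 0 < μ i) with hSdef
    have hSne : S.Nonempty := ⟨i₀, by simp [hSdef, hi₀]⟩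
    set lam : ℝ := S.inf' hSne μ with hlamdef
    have hlam : 0 < lam := by
      rw [hlamdef, Finset.lt_inf'_iff]
      intro i hi
      exact (Finset.mem_filter.mp hi).2
    set K : ℝ := ∑ i, ∑ j, ‖B i j‖ with hKdef
    have hK : 0 ≤ K := Finset.sum_nonneg fun i _ =>
      Finset.sum_nonneg fun j _ => norm_nonneg _
    set ε : ℝ := lam / (n * K + 1) with hεdef
    have hnK : (0:ℝ) ≤ n * K := mul_nonneg (Nat.cast_nonneg _) hK
    have hε : 0 < ε := div_pos hlam (by linarith)
    refine ⟨ε, hε, ?_⟩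
    have hBh' : ((ε : ℂ) • B).IsHermitian := by
      unfold Matrix.IsHermitian
      rw [conjTranspose_smul, hB.eq, Complex.star_def, Complex.conj_ofReal]
    refine posSemidef_of_re_nonneg (hDh.add hBh') fun x => ?_
    set g : Fin n → ℝ := fun i => ‖x i‖ with hgdef
    set f : ℝ := ∑ i, μ i * (g i)^2 with hfdef
    have hf : 0 ≤ f := Finset.sum_nonneg fun i _ => mul_nonneg (hμ i) (sq_nonneg _)
    have hterm : ∀ i j, ‖(starRingEnd ℂ) (x i) * (B i j * x j)‖
        ≤ K / (2 * lam) * (μ i * (g i)^2 + μ j * (g j)^2) := by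
      intro i j
      by_cases hBij : B i j = 0
      · rw [hBij]
        simp only [zero_mul, mul_zero, norm_zero]
        have : 0 ≤ μ i * (g i)^2 + μ j * (g j)^2 :=
          add_nonneg (mul_nonneg (hμ i) (sq_nonneg _)) (mul_nonneg (hμ j) (sq_nonneg _))
        positivity
      · have hi : 0 < μ i := (hμ i).lt_of_ne fun h => hBij (hz i j (Or.inl h.symm))
        have hj : 0 < μ j := (hμ j).lt_of_ne fun h => hBij (hz i j (Or.inr h.symm))
        have hli : lam ≤ μ i := Finset.inf'_le μ (by simp [hSdef, hi])
        have hlj : lam ≤ μ j := Finset.inf'_le μ (by simp [hSdef, hj])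
        have habs0 : 0 ≤ ‖B i j‖ := norm_nonneg _
        have habsK : ‖B i j‖ ≤ K := by
          calc ‖B i j‖ ≤ ∑ j', ‖B i j'‖ :=
              Finset.single_le_sum (fun j' _ => norm_nonneg _) (Finset.mem_univ j)
            _ ≤ K := Finset.single_le_sum (f := fun i => ∑ j', ‖B i j'‖)
                (fun i _ => Finset.sum_nonneg fun _ _ => norm_nonneg _)
                (Finset.mem_univ i)
        have heq : ‖(starRingEnd ℂ) (x i) * (B i j * x j)‖
            = ‖B i j‖ * (g i * g j) := by
          simp only [norm_mul, Complex.norm_conj, hgdef]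
          ring
        rw [heq, div_mul_eq_mul_div, le_div_iff₀ (by positivity)]
        have hgi : 0 ≤ g i := norm_nonneg _
        have hgj : 0 ≤ g j := norm_nonneg _
        nlinarith [mul_nonneg (mul_nonneg hlam.le habs0) (sq_nonneg (g i - g j)),
          mul_nonneg (mul_nonneg habs0 (sub_nonneg.2 hli)) (sq_nonneg (g i)),
          mul_nonneg (mul_nonneg habs0 (sub_nonneg.2 hlj)) (sq_nonneg (g j)),
          mul_nonneg (sub_nonneg.2 habsK)
            (add_nonneg (mul_nonneg hi.le (sq_nonneg (g i))) (mul_nonneg hj.le (sq_nonneg (g j))))]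
    have hBsum : |(star x ⬝ᵥ (B *ᵥ x)).re| ≤ (n * K / lam) * f := by
      have h1 : star x ⬝ᵥ (B *ᵥ x) = ∑ i, ∑ j, (starRingEnd ℂ) (x i) * (B i j * x j) := by
        simp [dotProduct, mulVec, Finset.mul_sum, Complex.star_def]
      calc |(star x ⬝ᵥ (B *ᵥ x)).re| ≤ ‖star x ⬝ᵥ (B *ᵥ x)‖ :=
            Complex.abs_re_le_norm _
        _ ≤ ∑ i, ∑ j, ‖(starRingEnd ℂ) (x i) * (B i j * x j)‖ := by
            rw [h1]
            exact (norm_sum_le _ _).trans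
              (Finset.sum_le_sum fun i _ => norm_sum_le _ _)
        _ ≤ ∑ i, ∑ j, K / (2 * lam) * (μ i * (g i)^2 + μ j * (g j)^2) :=
            Finset.sum_le_sum fun i _ => Finset.sum_le_sum fun j _ => hterm i j
        _ = (n * K / lam) * f := by
            have e1 : ∀ i : Fin n, ∑ j, K / (2 * lam) * (μ i * (g i)^2 + μ j * (g j)^2)
                = K / (2 * lam) * ((n : ℝ) * (μ i * (g i)^2) + f) := by
              intro i
              rw [← Finset.mul_sum, Finset.sum_add_distrib, Finset.sum_const, Finset.card_univ,
                Fintype.card_fin, nsmul_eq_mul, ← hfdef]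
            simp only [e1]
            rw [← Finset.mul_sum, Finset.sum_add_distrib, Finset.sum_const, Finset.card_univ,
              Fintype.card_fin, nsmul_eq_mul, ← Finset.mul_sum, ← hfdef]
            field_simp
            ring
    have hsplit : ((star x) ⬝ᵥ ((diagonal (fun i => (μ i : ℂ)) + (ε : ℂ) • B) *ᵥ x)).re
        = f + ε * (star x ⬝ᵥ (B *ᵥ x)).re := by
      rw [add_mulVec, dotProduct_add, Complex.add_re, diag_quad_re, smul_mulVec,
        dotProduct_smul, smul_eq_mul, Complex.re_ofReal_mul, hfdef]
    rw [hsplit]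
    have hc : ε * (n * K / lam) ≤ 1 := by
      have h2 : ε * (n * K / lam) = n * K / (n * K + 1) := by
        rw [hεdef]
        field_simp
      rw [h2, div_le_one (by linarith)]
      linarith
    have h6 : ε * (-((n * K / lam) * f)) ≤ ε * (star x ⬝ᵥ (B *ᵥ x)).re :=
      mul_le_mul_of_nonneg_left (abs_le.mp hBsum).1 hε.le
    nlinarith [mul_le_mul_of_nonneg_right hc hf]

lemma exists_eps {A B : Matrix (Fin n) (Fin n) ℂ} (hA : A.PosSemidef) (hB : B.IsHermitian)
    (hker : ∀ x, A *ᵥ x = 0 → B *ᵥ x = 0) :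
    ∃ ε : ℝ, 0 < ε ∧ (A + (ε : ℂ) • B).PosSemidef := by
  have hAh := hA.1
  set U : Matrix (Fin n) (Fin n) ℂ :=
    (Matrix.IsHermitian.eigenvectorUnitary hAh : Matrix (Fin n) (Fin n) ℂ) with hUdef
  have hU1 : U * star U = 1 :=
    mem_unitaryGroup_iff.mp (Matrix.IsHermitian.eigenvectorUnitary hAh).2
  set μ : Fin n → ℝ := hAh.eigenvalues with hμdef
  have hμ : ∀ i, 0 ≤ μ i := hA.eigenvalues_nonneg
  set B' : Matrix (Fin n) (Fin n) ℂ := star U * B * U with hB'def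
  have hB'h : B'.IsHermitian := isHermitian_conjTranspose_mul_mul U hB
  have hspec : A = U * diagonal (fun i => (μ i : ℂ)) * star U := hAh.spectral_theorem
  have hcolzero : ∀ i, μ i = 0 → ∀ j, B' j i = 0 := by
    intro i hμi j
    have hAv : A *ᵥ (U *ᵥ Pi.single i 1) = 0 := by
      rw [hspec, mulVec_mulVec, Matrix.mul_assoc (U * diagonal fun i => (μ i : ℂ)),
        show star U * U = 1 from mem_unitaryGroup_iff'.mp
          (Matrix.IsHermitian.eigenvectorUnitary hAh).2,
        Matrix.mul_one, ← mulVec_mulVec, diagonal_mulVec_single, hμi]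
      simp
    have hBv : B *ᵥ (U *ᵥ Pi.single i 1) = 0 := hker _ hAv
    have : B' *ᵥ Pi.single i 1 = 0 := by
      rw [hB'def, ← mulVec_mulVec, ← mulVec_mulVec, hBv, mulVec_zero]
    calc B' j i = (B' *ᵥ Pi.single i 1) j := by simp [mulVec_single]
      _ = 0 := by rw [this]; rfl
  have hcol : ∀ i j, (μ i = 0 ∨ μ j = 0) → B' i j = 0 := by
    rintro i j (h | h)
    · have := hcolzero i h j
      have h2 : B' i j = star (B' j i) := by
        conv_lhs => rw [← hB'h.eq]
        rfl
      rw [h2, this, star_zero]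
    · exact hcolzero j h i
  obtain ⟨ε, hε, hPSD⟩ := diag_core μ hμ B' hB'h hcol
  refine ⟨ε, hε, ?_⟩
  have h2 : (ε : ℂ) • B = U * ((ε : ℂ) • B') * star U := by
    rw [Matrix.mul_smul, Matrix.smul_mul]
    congr 1
    rw [hB'def]
    calc B = (U * star U) * B * (U * star U) := by rw [hU1]; simp
      _ = U * (star U * B * U) * star U := by simp only [Matrix.mul_assoc]
  have hkey : A + (ε : ℂ) • B = U * (diagonal (fun i => (μ i : ℂ)) + (ε : ℂ) • B') * star U := by
    rw [Matrix.mul_add, Matrix.add_mul, ← hspec, ← h2]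
  rw [hkey]
  exact hPSD.mul_mul_conjTranspose_same U

lemma ker_incl {A B : Matrix (Fin n) (Fin n) ℂ} (hA : A.IsHermitian) (hB : B.IsHermitian)
    (hr : LinearMap.range B.mulVecLin ≤ LinearMap.range A.mulVecLin) :
    ∀ x, A *ᵥ x = 0 → B *ᵥ x = 0 := by
  intro x hx
  have hxA : star x ᵥ* A = 0 := by
    have h := congrArg star hx
    rwa [star_mulVec, hA.eq, star_zero] at h
  have h1 : ∀ y, star x ⬝ᵥ (B *ᵥ y) = 0 := by
    intro y
    obtain ⟨z, hz⟩ := hr (LinearMap.mem_range_self B.mulVecLin y)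
    have hz' : A *ᵥ z = B *ᵥ y := by simpa [mulVecLin_apply] using hz
    rw [← hz', dotProduct_mulVec, hxA, zero_dotProduct]
  have h2 : star (B *ᵥ x) ⬝ᵥ (B *ᵥ x) = 0 := by
    rw [star_mulVec, hB.eq, ← dotProduct_mulVec]
    exact h1 _
  exact dotProduct_star_self_eq_zero.mp h2

end Aux

theorem stmt_7 {n : ℕ} (ρ π : Matrix (Fin n) (Fin n) ℂ)
    (hρ : IsDensityMatrix ρ) (hπ : IsDensityMatrix π) (hne : ρ ≠ π)
    (hrange : LinearMap.range π.mulVecLin ≤ LinearMap.range ρ.mulVecLin)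
    (p : ℝ) (hp : 0 < p)
    (hpos : (ρ + ((p : ℝ) : ℂ) • (ρ - π)).PosSemidef)
    (hmax : ∀ q : ℝ, p < q → ¬ (ρ + ((q : ℝ) : ℂ) • (ρ - π)).PosSemidef) :
    ¬ (LinearMap.range π.mulVecLin ≤
        LinearMap.range (ρ + ((p : ℝ) : ℂ) • (ρ - π)).mulVecLin) ∧
    LinearMap.range (ρ + ((p : ℝ) : ℂ) • (ρ - π)).mulVecLin <
      LinearMap.range ρ.mulVecLin ∧
    (ρ + ((p : ℝ) : ℂ) • (ρ - π)).rank < ρ.rank := by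
  obtain ⟨hρpsd, -⟩ := hρ
  obtain ⟨hπpsd, -⟩ := hπ
  set σ : Matrix (Fin n) (Fin n) ℂ := ρ + ((p : ℝ) : ℂ) • (ρ - π) with hσdef
  have hBherm : (ρ - π).IsHermitian := hρpsd.1.sub hπpsd.1
  have part1 : ¬ (LinearMap.range π.mulVecLin ≤ LinearMap.range σ.mulVecLin) := by
    intro hcon
    have hρle : LinearMap.range ρ.mulVecLin ≤ LinearMap.range σ.mulVecLin := by
      rintro v ⟨x, rfl⟩
      have hmem : σ.mulVecLin x + (p : ℂ) • π.mulVecLin x ∈ LinearMap.range σ.mulVecLin :=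
        Submodule.add_mem _ (LinearMap.mem_range_self _ x)
          (Submodule.smul_mem _ _ (hcon (LinearMap.mem_range_self _ x)))
      have heq : σ.mulVecLin x + (p : ℂ) • π.mulVecLin x
          = (1 + (p : ℂ)) • ρ.mulVecLin x := by
        simp only [hσdef, mulVecLin_apply, add_mulVec, smul_mulVec, sub_mulVec]
        module
      rw [heq] at hmem
      have hne0 : (1 + (p : ℂ)) ≠ 0 := by
        intro h
        have := congrArg Complex.re h
        simp at this
        linarith
      have h3 := Submodule.smul_mem _ (1 + (p : ℂ))⁻¹ hmem
      rwa [smul_smul, inv_mul_cancel₀ hne0, one_smul] at h3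
    have hsub : LinearMap.range (ρ - π).mulVecLin ≤ LinearMap.range σ.mulVecLin := by
      rintro v ⟨x, rfl⟩
      have h4 : (ρ - π).mulVecLin x = ρ.mulVecLin x - π.mulVecLin x := by
        simp [mulVecLin_apply, sub_mulVec]
      rw [h4]
      exact Submodule.sub_mem _ (hρle (LinearMap.mem_range_self _ x))
        (hcon (LinearMap.mem_range_self _ x))
    have hker := ker_incl hpos.1 hBherm hsub
    obtain ⟨ε, hε, hP⟩ := exists_eps hpos hBherm hker
    refine hmax (p + ε) (by linarith) ?_
    have h5 : ρ + (((p + ε : ℝ)) : ℂ) • (ρ - π) = σ + (ε : ℂ) • (ρ - π) := by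
      rw [hσdef]
      push_cast
      rw [add_smul]
      abel
    rw [h5]
    exact hP
  have hle : LinearMap.range σ.mulVecLin ≤ LinearMap.range ρ.mulVecLin := by
    rintro v ⟨x, rfl⟩
    have h6 : σ.mulVecLin x
        = ρ.mulVecLin x + (p : ℂ) • (ρ.mulVecLin x - π.mulVecLin x) := by
      simp only [hσdef, mulVecLin_apply, add_mulVec, smul_mulVec, sub_mulVec]
    rw [h6]
    exact Submodule.add_mem _ (LinearMap.mem_range_self _ x)
      (Submodule.smul_mem _ _ (Submodule.sub_mem _ (LinearMap.mem_range_self _ x)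
        (hrange (LinearMap.mem_range_self _ x))))
  have part2 : LinearMap.range σ.mulVecLin < LinearMap.range ρ.mulVecLin :=
    lt_of_le_of_ne hle fun h => part1 (le_trans hrange (le_of_eq h.symm))
  refine ⟨part1, part2, ?_⟩
  rw [Matrix.rank, Matrix.rank]
  exact Submodule.finrank_lt_finrank_of_lt part2
end

section
/- Let P be a homogeneous multivariate polynomial of degree D ≥ 1 in n complex variables, and let ρ be a density matrix on ℂ^n with rank ρ ≥ 2 (i.e., ρ is a mixed state). Then there exists a unit vector ψ in the range (column space) of ρ such that P(ψ) = 0. -/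
open Matrix
open scoped ComplexOrder

/-- Evaluation of a homogeneous polynomial at a scalar multiple. -/
lemma eval_smul_homog {n : ℕ} {P : MvPolynomial (Fin n) ℂ} {D : ℕ}
    (hP : P.IsHomogeneous D) (c : ℂ) (x : Fin n → ℂ) :
    MvPolynomial.eval (c • x) P = c ^ D * MvPolynomial.eval x P := by
  rw [MvPolynomial.eval_eq', MvPolynomial.eval_eq', Finset.mul_sum]
  apply Finset.sum_congr rfl
  intro d hd
  have hdeg : ∑ i, d i = D := by
    have h1 := hP (MvPolynomial.mem_support_iff.mp hd)
    have h2 : (Finsupp.weight (1 : Fin n → ℕ)) d = ∑ i, d i := by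
      rw [Finsupp.weight_apply, Finsupp.sum_fintype]
      · simp
      · intro i; simp
    rw [← h2, h1]
  have : ∏ i, (c • x) i ^ d i = c ^ D * ∏ i, x i ^ d i := by
    simp only [Pi.smul_apply, smul_eq_mul, mul_pow]
    rw [Finset.prod_mul_distrib, Finset.prod_pow_eq_pow_sum, hdeg]
  rw [this]; ring

/-- The restriction of `P` along the affine line `t ↦ u + t • v`, as a
one-variable polynomial. -/
noncomputable def lineRestrict {n : ℕ} (P : MvPolynomial (Fin n) ℂ)
    (u v : Fin n → ℂ) : Polynomial ℂ :=
  MvPolynomial.aeval (fun i => Polynomial.C (u i) + Polynomial.C (v i) * Polynomial.X) P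

lemma lineRestrict_eval {n : ℕ} (P : MvPolynomial (Fin n) ℂ) (u v : Fin n → ℂ) (t : ℂ) :
    (lineRestrict P u v).eval t = MvPolynomial.eval (u + t • v) P := by
  rw [lineRestrict, ← Polynomial.coe_aeval_eq_eval]
  have := congrArg (fun φ => φ P)
    (MvPolynomial.comp_aeval (f := fun i => Polynomial.C (u i) + Polynomial.C (v i) * Polynomial.X)
      (Polynomial.aeval t : Polynomial ℂ →ₐ[ℂ] ℂ))
  simp only [AlgHom.comp_apply] at this
  rw [this]
  have hfun : (fun i => (Polynomial.aeval t) (Polynomial.C (u i) + Polynomial.C (v i)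
      * Polynomial.X)) = u + t • v := by
    funext i
    simp only [map_add, _root_.map_mul, Polynomial.aeval_C, Polynomial.aeval_X, Pi.add_apply,
      Pi.smul_apply, smul_eq_mul, Algebra.algebraMap_self_apply]
    ring
  rw [hfun]
  exact congrFun (congrArg DFunLike.coe (MvPolynomial.coe_aeval_eq_eval (u + t • v))) P

/-- On a plane spanned by two independent vectors, a homogeneous polynomial of
positive degree has a nontrivial zero. -/
lemma exists_zero_on_plane {n : ℕ} {P : MvPolynomial (Fin n) ℂ} {D : ℕ} (hD : 1 ≤ D)
    (hP : P.IsHomogeneous D) (u v : Fin n → ℂ) (hind : LinearIndependent ℂ ![u, v]) :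
    ∃ (a b : ℂ), a • u + b • v ≠ 0 ∧ MvPolynomial.eval (a • u + b • v) P = 0 := by
  rw [linearIndependent_fin2] at hind
  simp only [Matrix.cons_val_one, Matrix.head_cons, Matrix.cons_val_zero] at hind
  obtain ⟨hv, huv⟩ := hind
  set g := lineRestrict P u v with hgdef
  by_cases hroot : ∃ t, g.eval t = 0
  · obtain ⟨t, ht⟩ := hroot
    refine ⟨1, t, ?_, ?_⟩
    · intro h
      rw [one_smul] at h
      exact huv (-t) (by rw [neg_smul]; exact (eq_neg_of_add_eq_zero_left h).symm)
    · rw [one_smul, ← lineRestrict_eval]; exact ht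
  · -- no root: g is a nonzero constant c; then P vanishes at v
    push_neg at hroot
    have hdeg : g.degree = 0 := by
      by_contra hd
      obtain ⟨t, ht⟩ := Complex.isAlgClosed.exists_root g hd
      exact hroot t ht
    have hc : g = Polynomial.C (g.coeff 0) := Polynomial.eq_C_of_degree_le_zero hdeg.le
    set c := g.coeff 0 with hcdef
    have hgc : ∀ t, g.eval t = c := by intro t; rw [hc]; simp
    -- consider h(t) = P (v + t • u); for t ≠ 0 it equals c * t ^ D
    set h := lineRestrict P v u with hhdef
    have hht : ∀ t : ℂ, t ≠ 0 → h.eval t = c * t ^ D := by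
      intro t ht
      rw [lineRestrict_eval]
      have : v + t • u = t • (u + t⁻¹ • v) := by
        rw [smul_add, smul_smul, mul_inv_cancel₀ ht, one_smul, add_comm]
      rw [this, eval_smul_homog hP, ← lineRestrict_eval, hgc]
      ring
    have heq : h - Polynomial.C c * Polynomial.X ^ D = 0 := by
      apply Polynomial.eq_zero_of_infinite_isRoot
      apply Set.Infinite.mono (s := {x : ℂ | x ≠ 0})
      · intro x hx
        simp only [Set.mem_setOf_eq, Polynomial.IsRoot, Polynomial.eval_sub,
          Polynomial.eval_mul, Polynomial.eval_C, Polynomial.eval_pow, Polynomial.eval_X]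
        rw [hht x hx]; ring
      · exact Set.Finite.infinite_compl (Set.finite_singleton 0)
    have hPv : MvPolynomial.eval v P = 0 := by
      have := congrArg (Polynomial.eval 0) heq
      simp only [Polynomial.eval_sub, Polynomial.eval_mul, Polynomial.eval_C,
        Polynomial.eval_pow, Polynomial.eval_X, Polynomial.eval_zero, sub_eq_zero] at this
      rw [zero_pow (by omega : D ≠ 0), mul_zero] at this
      have h0 : h.eval 0 = MvPolynomial.eval v P := by
        rw [hhdef, lineRestrict_eval]; simp
      rw [← h0, this]
    exact ⟨0, 1, by simpa using hv, by simpa using hPv⟩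

theorem stmt_9 {n : ℕ} (P : MvPolynomial (Fin n) ℂ) (D : ℕ) (hD : 1 ≤ D)
    (hP : P.IsHomogeneous D) (ρ : Matrix (Fin n) (Fin n) ℂ)
    (hρ : IsDensityMatrix ρ) (hrank : 2 ≤ ρ.rank) :
    ∃ ψ : Fin n → ℂ, star ψ ⬝ᵥ ψ = 1 ∧ ψ ∈ LinearMap.range ρ.mulVecLin ∧
      MvPolynomial.eval ψ P = 0 := by
  set W := LinearMap.range ρ.mulVecLin with hW
  have hfr : 2 ≤ Module.finrank ℂ W := hrank
  obtain ⟨f, hf⟩ := exists_linearIndependent_of_le_finrank hfr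
  have hind : LinearIndependent ℂ ![(f 0 : Fin n → ℂ), (f 1 : Fin n → ℂ)] := by
    have := hf.map' W.subtype (Submodule.ker_subtype W)
    have heq : ![(f 0 : Fin n → ℂ), (f 1 : Fin n → ℂ)] = W.subtype ∘ f := by
      funext i
      fin_cases i <;> rfl
    rwa [heq]
  obtain ⟨a, b, hw0, hPw⟩ := exists_zero_on_plane hD hP _ _ hind
  set w : Fin n → ℂ := a • (f 0 : Fin n → ℂ) + b • (f 1 : Fin n → ℂ) with hwdef
  have hwW : w ∈ W := W.add_mem (W.smul_mem a (f 0).2) (W.smul_mem b (f 1).2)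
  -- normalize w
  set S : ℝ := ∑ i, Complex.normSq (w i) with hS
  have hSpos : 0 < S := by
    obtain ⟨i, hi⟩ : ∃ i, w i ≠ 0 := by
      by_contra hcon
      push_neg at hcon
      exact hw0 (funext hcon)
    apply Finset.sum_pos' (fun j _ => Complex.normSq_nonneg _)
    exact ⟨i, Finset.mem_univ i, Complex.normSq_pos.mpr hi⟩
  set r : ℝ := (Real.sqrt S)⁻¹ with hr
  refine ⟨(r : ℂ) • w, ?_, ?_, ?_⟩
  · have hstar : star ((r : ℂ) • w) = (r : ℂ) • star w := by
      rw [star_smul]; norm_num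
    rw [hstar, smul_dotProduct, dotProduct_smul]
    have hdot : star w ⬝ᵥ w = (S : ℂ) := by
      rw [dotProduct, hS]
      push_cast
      apply Finset.sum_congr rfl
      intro i _
      simp [Pi.star_apply, Complex.normSq_eq_conj_mul_self]
    rw [hdot, smul_eq_mul, smul_eq_mul, ← mul_assoc]
    rw [show ((r : ℂ) * r = ((r * r : ℝ) : ℂ)) by push_cast; ring]
    rw [hr, ← Real.sqrt_inv, Real.mul_self_sqrt (by positivity)]
    rw [show (((S⁻¹ : ℝ) : ℂ) * (S : ℂ) = (((S⁻¹ * S : ℝ)) : ℂ)) by push_cast; ring]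
    rw [inv_mul_cancel₀ (ne_of_gt hSpos)]
    norm_num
  · exact W.smul_mem _ hwW
  · rw [eval_smul_homog hP, hPw, mul_zero]
end

section
/- Let P be a homogeneous multivariate polynomial of degree D ≥ 1 in n complex variables, and let ρ be a density matrix on ℂ^n. Then there exists a finite pure-state ensemble for ρ containing at most one state on which P is nonzero: that is, there exist m ∈ ℕ, weights p_1, …, p_m > 0 with Σ_i p_i = 1, and unit vectors ψ_1, …, ψ_m ∈ ℂ^n with ρ = Σ_i p_i ψ_i ψ_i†, such that P(ψ_i) = 0 for all indices i except possibly one. -/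
lemma eval_smul_of_homog {n D : ℕ} {P : MvPolynomial (Fin n) ℂ} (hP : P.IsHomogeneous D)
    (c : ℂ) (x : Fin n → ℂ) :
    MvPolynomial.eval (fun i => c * x i) P = c ^ D * MvPolynomial.eval x P := by
  rw [MvPolynomial.eval_eq', MvPolynomial.eval_eq', Finset.mul_sum]
  apply Finset.sum_congr rfl
  intro d hd
  have hdeg : (Finsupp.weight 1) d = D := hP (MvPolynomial.mem_support_iff.mp hd)
  have hsum : ∑ i, d i = D := by
    rw [← hdeg, Finsupp.weight_apply, Finsupp.sum]
    simp only [Pi.one_apply, smul_eq_mul, mul_one]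
    exact (Finset.sum_subset (Finset.subset_univ _) (by
      intro x _ hx; exact Finsupp.notMem_support_iff.mp hx)).symm
  have : ∏ i, (c * x i) ^ d i = (∏ i, c ^ d i) * ∏ i, x i ^ d i := by
    rw [← Finset.prod_mul_distrib]; simp [mul_pow]
  rw [this, Finset.prod_pow_eq_pow_sum, hsum]
  ring

lemma eval_pair_poly {n : ℕ} (P : MvPolynomial (Fin n) ℂ) (u v : Fin n → ℂ) (t : ℂ) :
    Polynomial.eval t (MvPolynomial.aeval
        (fun i => Polynomial.C (u i) + Polynomial.C (v i) * Polynomial.X) P) =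
      MvPolynomial.eval (fun i => u i + t * v i) P := by
  induction P using MvPolynomial.induction_on with
  | C a => simp
  | add p q hp hq => simp [hp, hq]
  | mul_X p i hp =>
      simp only [map_mul, MvPolynomial.aeval_X, Polynomial.eval_mul, Polynomial.eval_add,
        Polynomial.eval_C, Polynomial.eval_X, hp, MvPolynomial.eval_mul, MvPolynomial.eval_X]
      ring

lemma exists_root_pair {n D : ℕ} (hD : 1 ≤ D) {P : MvPolynomial (Fin n) ℂ}
    (hP : P.IsHomogeneous D) (u v : Fin n → ℂ) :
    ∃ α β : ℂ, ¬(α = 0 ∧ β = 0) ∧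
      MvPolynomial.eval (fun i => α * u i + β * v i) P = 0 := by
  set g : Polynomial ℂ := MvPolynomial.aeval
    (fun i => Polynomial.C (u i) + Polynomial.C (v i) * Polynomial.X) P with hgdef
  by_cases hdeg : g.natDegree = 0
  · have hc : g = Polynomial.C (g.coeff 0) := Polynomial.eq_C_of_natDegree_eq_zero hdeg
    by_cases hc0 : g.coeff 0 = 0
    · refine ⟨1, 0, by simp, ?_⟩
      have key : MvPolynomial.eval (fun i => u i + (0:ℂ) * v i) P = 0 := by
        rw [← eval_pair_poly P u v 0, ← hgdef, hc, Polynomial.eval_C, hc0]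
      have efun : (fun i => (1:ℂ) * u i + (0:ℂ) * v i) = (fun i => u i + (0:ℂ) * v i) := by
        funext i; ring
      rw [efun]; exact key
    · refine ⟨0, 1, by simp, ?_⟩
      set h : Polynomial ℂ := MvPolynomial.aeval
        (fun i => Polynomial.C (v i) + Polynomial.C (u i) * Polynomial.X) P with hhdef
      have hh : ∀ s : ℂ, s ≠ 0 →
          Polynomial.eval s h = Polynomial.eval s (Polynomial.C (g.coeff 0) * Polynomial.X ^ D) := by
        intro s hs
        have e1 : Polynomial.eval s h = MvPolynomial.eval (fun i => v i + s * u i) P :=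
          eval_pair_poly P v u s
        have e2 : (fun i => v i + s * u i) = (fun i => s * (u i + s⁻¹ * v i)) := by
          funext i; field_simp; ring
        rw [e1, e2, eval_smul_of_homog hP, ← eval_pair_poly P u v s⁻¹, ← hgdef, hc,
          Polynomial.eval_C, Polynomial.eval_mul, Polynomial.eval_C, Polynomial.eval_pow,
          Polynomial.eval_X]
        simp [mul_comm]
      have hinf : h = Polynomial.C (g.coeff 0) * Polynomial.X ^ D := by
        apply Polynomial.eq_of_infinite_eval_eq
        exact Set.Infinite.mono (fun s hs => hh s hs)
          ((Set.finite_singleton (0:ℂ)).infinite_compl)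
      have key : MvPolynomial.eval (fun i => v i + (0:ℂ) * u i) P = 0 := by
        rw [← eval_pair_poly P v u 0, ← hhdef, hinf]
        simp [zero_pow (by omega : D ≠ 0)]
      have efun : (fun i => (0:ℂ) * u i + (1:ℂ) * v i) = (fun i => v i + (0:ℂ) * u i) := by
        funext i; ring
      rw [efun]; exact key
  · have hdpos : 0 < g.degree := Polynomial.natDegree_pos_iff_degree_pos.mp
      (Nat.pos_of_ne_zero hdeg)
    obtain ⟨t, ht⟩ := Complex.exists_root hdpos
    refine ⟨1, t, by simp, ?_⟩
    have key : MvPolynomial.eval (fun i => u i + t * v i) P = 0 := by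
      rw [← eval_pair_poly P u v t, ← hgdef]; exact ht
    have efun : (fun i => (1:ℂ) * u i + t * v i) = (fun i => u i + t * v i) := by
      funext i; ring
    rw [efun]; exact key
open Matrix

section helpers
variable {n : ℕ}

lemma dot_right_combo (y x1 x2 : Fin n → ℂ) (a b : ℂ) :
    star y ⬝ᵥ (fun i => a * x1 i + b * x2 i) = a * (star y ⬝ᵥ x1) + b * (star y ⬝ᵥ x2) := by
  simp only [dotProduct, Pi.star_apply, Finset.mul_sum, ← Finset.sum_add_distrib]
  apply Finset.sum_congr rfl; intros; ring

lemma dot_expand (a b c d : ℂ) (x y : Fin n → ℂ) :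
    star (fun i => a * x i + b * y i) ⬝ᵥ (fun i => c * x i + d * y i)
      = ((starRingEnd ℂ) a * c) * (star x ⬝ᵥ x) + ((starRingEnd ℂ) a * d) * (star x ⬝ᵥ y)
        + ((starRingEnd ℂ) b * c) * (star y ⬝ᵥ x) + ((starRingEnd ℂ) b * d) * (star y ⬝ᵥ y) := by
  simp only [dotProduct, Pi.star_apply, star_add, star_mul', Finset.mul_sum,
    ← Finset.sum_add_distrib, RingHom.coe_coe]
  apply Finset.sum_congr rfl; intros; simp only [Complex.star_def]; ring

lemma star_dot_comm (x y : Fin n → ℂ) :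
    star x ⬝ᵥ y = (starRingEnd ℂ) (star y ⬝ᵥ x) := by
  simp only [dotProduct, Pi.star_apply, map_sum, _root_.map_mul, Complex.star_def,
    Complex.conj_conj]
  apply Finset.sum_congr rfl; intros; ring

end helpers

lemma merge_lemma {n D : ℕ} (hD : 1 ≤ D) {P : MvPolynomial (Fin n) ℂ}
    (hP : P.IsHomogeneous D) (u v : Fin n → ℂ) (r l : ℝ) (hr : 0 < r) (hl : 0 < l)
    (hu : star u ⬝ᵥ u = 1) (hv : star v ⬝ᵥ v = 1) (huv : star u ⬝ᵥ v = 0) :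
    ∃ (t s : ℝ) (z w : Fin n → ℂ), 0 < t ∧ 0 < s ∧
      star z ⬝ᵥ z = 1 ∧ star w ⬝ᵥ w = 1 ∧
      (r : ℂ) • vecMulVec u (star u) + (l : ℂ) • vecMulVec v (star v)
        = (t : ℂ) • vecMulVec z (star z) + (s : ℂ) • vecMulVec w (star w) ∧
      MvPolynomial.eval z P = 0 ∧
      (∀ y : Fin n → ℂ, star y ⬝ᵥ u = 0 → star y ⬝ᵥ v = 0 → star y ⬝ᵥ w = 0) := by
  have hvu : star v ⬝ᵥ u = 0 := by rw [star_dot_comm, huv, map_zero]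
  obtain ⟨α, β, hαβ, hroot⟩ := exists_root_pair hD hP u v
  set A : ℝ := Complex.normSq α with hA
  set B : ℝ := Complex.normSq β with hB
  have hAnn : 0 ≤ A := Complex.normSq_nonneg α
  have hBnn : 0 ≤ B := Complex.normSq_nonneg β
  set dR : ℝ := l * A + r * B with hdR
  have hdRpos : 0 < dR := by
    rcases not_and_or.mp hαβ with h | h
    · exact add_pos_of_pos_of_nonneg (mul_pos hl (Complex.normSq_pos.mpr h))
        (mul_nonneg hr.le hBnn)
    · exact add_pos_of_nonneg_of_pos (mul_nonneg hl.le hAnn)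
        (mul_pos hr (Complex.normSq_pos.mpr h))
  set Nz : ℝ := A + B with hNz
  have hNzpos : 0 < Nz := by
    rcases not_and_or.mp hαβ with h | h
    · exact add_pos_of_pos_of_nonneg (Complex.normSq_pos.mpr h) hBnn
    · exact add_pos_of_nonneg_of_pos hAnn (Complex.normSq_pos.mpr h)
  set Nw : ℝ := r ^ 2 * B + l ^ 2 * A with hNw
  have hNwpos : 0 < Nw := by
    rcases not_and_or.mp hαβ with h | h
    · exact add_pos_of_nonneg_of_pos (mul_nonneg (sq_nonneg r) hBnn)
        (mul_pos (pow_pos hl 2) (Complex.normSq_pos.mpr h))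
    · exact add_pos_of_pos_of_nonneg (mul_pos (pow_pos hr 2) (Complex.normSq_pos.mpr h))
        (mul_nonneg (sq_nonneg l) hAnn)
  set t₀ : ℝ := r * l / dR with ht₀
  have ht₀pos : 0 < t₀ := div_pos (mul_pos hr hl) hdRpos
  set s₀ : ℝ := 1 / dR with hs₀
  have hs₀pos : 0 < s₀ := by positivity
  set γ : ℂ := -(r : ℂ) * (starRingEnd ℂ) β with hγ
  set δ : ℂ := (l : ℂ) * (starRingEnd ℂ) α with hδ
  set z₀ : Fin n → ℂ := fun i => α * u i + β * v i with hz₀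
  set w₀ : Fin n → ℂ := fun i => γ * u i + δ * v i with hw₀
  have hdC : (dR : ℂ) ≠ 0 := Complex.ofReal_ne_zero.mpr hdRpos.ne'
  have hAC : (A : ℂ) = α * (starRingEnd ℂ) α := by rw [hA, Complex.mul_conj]
  have hBC : (B : ℂ) = β * (starRingEnd ℂ) β := by rw [hB, Complex.mul_conj]
  have hdC' : (dR : ℂ) = (l : ℂ) * (α * (starRingEnd ℂ) α)
      + (r : ℂ) * (β * (starRingEnd ℂ) β) := by
    rw [← hAC, ← hBC, hdR]; push_cast; ring
  have hdne : (l : ℂ) * (α * (starRingEnd ℂ) α) + (r : ℂ) * (β * (starRingEnd ℂ) β) ≠ 0 := by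
    rw [← hdC']; exact hdC
  -- core matrix identity (unnormalized)
  have core : (r : ℂ) • vecMulVec u (star u) + (l : ℂ) • vecMulVec v (star v)
      = (t₀ : ℂ) • vecMulVec z₀ (star z₀) + (s₀ : ℂ) • vecMulVec w₀ (star w₀) := by
    have ht₀C : (t₀ : ℂ) = (r : ℂ) * (l : ℂ) / (dR : ℂ) := by push_cast [ht₀]; ring
    have hs₀C : (s₀ : ℂ) = 1 / (dR : ℂ) := by push_cast [hs₀]; ring
    ext a b
    simp only [Matrix.add_apply, Matrix.smul_apply, vecMulVec_apply, Pi.star_apply,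
      smul_eq_mul, hz₀, hw₀, hγ, hδ, star_add, star_mul', Complex.star_def,
      Complex.conj_conj, map_neg, Complex.conj_ofReal]
    rw [ht₀C, hs₀C, hdC']
    linear_combination (-((r:ℂ) * u a * (starRingEnd ℂ) (u b) + (l:ℂ) * v a * (starRingEnd ℂ) (v b))) * mul_inv_cancel₀ hdne
  -- normalized vectors
  set cz : ℝ := (Real.sqrt Nz)⁻¹ with hcz
  set cw : ℝ := (Real.sqrt Nw)⁻¹ with hcw
  have hcz2 : cz * cz * Nz = 1 := by
    rw [hcz, ← mul_inv, Real.mul_self_sqrt hNzpos.le]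
    exact inv_mul_cancel₀ hNzpos.ne'
  have hcw2 : cw * cw * Nw = 1 := by
    rw [hcw, ← mul_inv, Real.mul_self_sqrt hNwpos.le]
    exact inv_mul_cancel₀ hNwpos.ne'
  have hzdot : star z₀ ⬝ᵥ z₀ = ((Nz : ℝ) : ℂ) := by
    have h := dot_expand α β α β u v
    rw [hu, hv, huv, hvu, ← hz₀] at h
    rw [h, hNz]; push_cast [hAC, hBC]; ring
  have hwdot : star w₀ ⬝ᵥ w₀ = ((Nw : ℝ) : ℂ) := by
    have h := dot_expand γ δ γ δ u v
    rw [hu, hv, huv, hvu, ← hw₀] at h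
    rw [h, hNw, hγ, hδ]
    push_cast [hAC, hBC]
    simp only [_root_.map_mul, map_neg, Complex.conj_ofReal, Complex.conj_conj]
    ring
  have dot_scale : ∀ (c : ℂ) (x : Fin n → ℂ),
      star (fun i => c * x i) ⬝ᵥ (fun i => c * x i) = star c * c * (star x ⬝ᵥ x) := by
    intro c x
    simp only [dotProduct, Pi.star_apply, star_mul', Finset.mul_sum]
    apply Finset.sum_congr rfl; intros; ring
  have vmv_scale : ∀ (c : ℝ) (x : Fin n → ℂ),
      vecMulVec (fun i => (c : ℂ) * x i) (star (fun i => (c : ℂ) * x i))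
        = ((c * c : ℝ) : ℂ) • vecMulVec x (star x) := by
    intro c x
    ext a b
    simp only [vecMulVec_apply, Pi.star_apply, Matrix.smul_apply, star_mul',
      Complex.star_def, Complex.conj_ofReal, smul_eq_mul]
    push_cast; ring
  have starcz : star ((cz : ℝ) : ℂ) = ((cz : ℝ) : ℂ) := by
    rw [Complex.star_def, Complex.conj_ofReal]
  have starcw : star ((cw : ℝ) : ℂ) = ((cw : ℝ) : ℂ) := by
    rw [Complex.star_def, Complex.conj_ofReal]
  refine ⟨t₀ * Nz, s₀ * Nw, fun i => (cz : ℂ) * z₀ i, fun i => (cw : ℂ) * w₀ i,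
    mul_pos ht₀pos hNzpos, mul_pos hs₀pos hNwpos, ?_, ?_, ?_, ?_, ?_⟩
  · rw [dot_scale, starcz, hzdot, ← Complex.ofReal_mul, ← Complex.ofReal_mul, hcz2,
      Complex.ofReal_one]
  · rw [dot_scale, starcw, hwdot, ← Complex.ofReal_mul, ← Complex.ofReal_mul, hcw2,
      Complex.ofReal_one]
  · rw [core, vmv_scale, vmv_scale, smul_smul, smul_smul, ← Complex.ofReal_mul,
      ← Complex.ofReal_mul]
    congr 2
    · rw [show t₀ * Nz * (cz * cz) = t₀ * (cz * cz * Nz) by ring, hcz2, mul_one]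
    · rw [show s₀ * Nw * (cw * cw) = s₀ * (cw * cw * Nw) by ring, hcw2, mul_one]
  · rw [eval_smul_of_homog hP ((cz : ℝ) : ℂ) z₀, hroot, mul_zero]
  · intro y hyu hyv
    have hwfun : (fun i => (cw : ℂ) * w₀ i) = fun i => ((cw : ℂ) * γ) * u i + ((cw : ℂ) * δ) * v i := by
      funext i; rw [hw₀]; ring
    rw [hwfun, dot_right_combo, hyu, hyv, mul_zero, mul_zero, add_zero]
lemma add_shuffle {M : Type*} [AddCommGroup M] (E M1 M2 Z W : M) (h : M1 + M2 = Z + W) :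
    M2 + (E + M1) = E + Z + W := by rw [add_assoc, ← h]; abel

lemma fold_lemma {n D : ℕ} (hD : 1 ≤ D) {P : MvPolynomial (Fin n) ℂ} (hP : P.IsHomogeneous D)
    (v : Fin n → Fin n → ℂ) (ε : Fin n → ℝ)
    (hunit : ∀ i, star (v i) ⬝ᵥ v i = 1)
    (horth : ∀ i j, i ≠ j → star (v i) ⬝ᵥ v j = 0) :
    ∀ (s : Finset (Fin n)), s.Nonempty → (∀ i ∈ s, 0 < ε i) →
    ∃ (m : ℕ) (p : Fin m → ℝ) (ψ : Fin m → Fin n → ℂ),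
      (∀ i, 0 < p i) ∧ (∀ i, star (ψ i) ⬝ᵥ ψ i = 1) ∧
      (∑ i ∈ s, ((ε i : ℝ) : ℂ) • vecMulVec (v i) (star (v i)))
        = ∑ i, ((p i : ℝ) : ℂ) • vecMulVec (ψ i) (star (ψ i)) ∧
      ∃ j : Fin m, (∀ i, i ≠ j → MvPolynomial.eval (ψ i) P = 0) ∧
        (∀ y : Fin n → ℂ, (∀ i ∈ s, star y ⬝ᵥ v i = 0) → star y ⬝ᵥ ψ j = 0) := by
  intro s
  induction s using Finset.cons_induction with
  | empty => intro h; exact absurd h (by simp)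
  | cons a t hat ih =>
    intro _ hpos
    rcases Finset.eq_empty_or_nonempty t with ht | ht
    · -- singleton base case
      subst ht
      refine ⟨1, fun _ => ε a, fun _ => v a, fun _ => hpos a (by simp), fun _ => hunit a, ?_,
        0, fun i hi => absurd (Subsingleton.elim i 0) hi, fun y hy => hy a (by simp)⟩
      simp
    · obtain ⟨m, p, ψ, hp, hψu, hsum, j, hroots, horthj⟩ :=
        ih ht (fun i hi => hpos i (Finset.mem_cons_of_mem hi))
      -- ψ j is orthogonal to v a
      have hva_t : ∀ i ∈ t, star (v a) ⬝ᵥ v i = 0 := by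
        intro i hi
        exact horth a i (fun h => hat (h ▸ hi))
      have hvaψj : star (v a) ⬝ᵥ ψ j = 0 := horthj (v a) hva_t
      have hψjva : star (ψ j) ⬝ᵥ v a = 0 := by
        rw [star_dot_comm, hvaψj, map_zero]
      obtain ⟨t', s', z, w, ht', hs', hzu, hwu, hmerge, hzero, horthw⟩ :=
        merge_lemma hD hP (ψ j) (v a) (p j) (ε a) (hp j) (hpos a (Finset.mem_cons_self a t))
          (hψu j) (hunit a) hψjva
      refine ⟨m + 1, Fin.snoc (Function.update p j t') s',
        Fin.snoc (Function.update ψ j z) w, ?_, ?_, ?_, Fin.last m, ?_, ?_⟩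
      · intro i
        refine Fin.lastCases ?_ (fun i0 => ?_) i
        · simpa using hs'
        · simp only [Fin.snoc_castSucc]
          by_cases h : i0 = j
          · subst h; simpa using ht'
          · simpa [Function.update_of_ne h] using hp i0
      · intro i
        refine Fin.lastCases ?_ (fun i0 => ?_) i
        · simpa using hwu
        · simp only [Fin.snoc_castSucc]
          by_cases h : i0 = j
          · subst h; simpa using hzu
          · simpa [Function.update_of_ne h] using hψu i0
      · rw [Finset.sum_cons, hsum, Fin.sum_univ_castSucc]
        simp only [Fin.snoc_castSucc, Fin.snoc_last]
        have e1 : ∑ i : Fin m,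
            ((Function.update p j t' i : ℝ) : ℂ) • vecMulVec (Function.update ψ j z i)
              (star (Function.update ψ j z i))
            = ∑ i ∈ Finset.univ.erase j,
                ((p i : ℝ) : ℂ) • vecMulVec (ψ i) (star (ψ i))
              + (t' : ℂ) • vecMulVec z (star z) := by
          rw [← Finset.sum_erase_add _ _ (Finset.mem_univ j)]
          congr 1
          · apply Finset.sum_congr rfl
            intro i hi
            have hij : i ≠ j := (Finset.mem_erase.mp hi).1
            rw [Function.update_of_ne hij, Function.update_of_ne hij]
          · rw [Function.update_self, Function.update_self]
        have e2 : ∑ i : Fin m, ((p i : ℝ) : ℂ) • vecMulVec (ψ i) (star (ψ i))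
            = ∑ i ∈ Finset.univ.erase j,
                ((p i : ℝ) : ℂ) • vecMulVec (ψ i) (star (ψ i))
              + ((p j : ℝ) : ℂ) • vecMulVec (ψ j) (star (ψ j)) := by
          rw [Finset.sum_erase_add _ _ (Finset.mem_univ j)]
        rw [e1, e2]
        exact add_shuffle _ _ _ _ _ hmerge
      · intro i hi
        rcases Fin.eq_castSucc_or_eq_last i with ⟨i0, rfl⟩ | rfl
        · simp only [Fin.snoc_castSucc]
          by_cases h : i0 = j
          · subst h; rw [Function.update_self]; exact hzero
          · rw [Function.update_of_ne h]
            exact hroots i0 h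
        · exact absurd rfl hi
      · intro y hy
        simp only [Fin.snoc_last]
        exact horthw y (horthj y (fun i hi => hy i (Finset.mem_cons_of_mem hi)))
          (hy a (Finset.mem_cons_self a t))

open scoped ComplexOrder

theorem stmt_10 {n : ℕ} (P : MvPolynomial (Fin n) ℂ) (D : ℕ) (hD : 1 ≤ D)
    (hP : P.IsHomogeneous D) (ρ : Matrix (Fin n) (Fin n) ℂ)
    (hρ : IsDensityMatrix ρ) :
    ∃ (m : ℕ) (p : Fin m → ℝ) (ψ : Fin m → Fin n → ℂ),
      (∀ i, 0 < p i) ∧ (∑ i, p i) = 1 ∧ (∀ i, star (ψ i) ⬝ᵥ ψ i = 1) ∧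
      ρ = ∑ i, ((p i : ℝ) : ℂ) • Matrix.vecMulVec (ψ i) (star (ψ i)) ∧
      ∃ j : Fin m, ∀ i, i ≠ j → MvPolynomial.eval (ψ i) P = 0 := by
  have hH : ρ.IsHermitian := hρ.1.1
  set ε := hH.eigenvalues with hε
  have hεnn : ∀ i, 0 ≤ ε i := hρ.1.eigenvalues_nonneg
  set U : Matrix (Fin n) (Fin n) ℂ := (hH.eigenvectorUnitary : Matrix (Fin n) (Fin n) ℂ)
    with hU
  set v : Fin n → Fin n → ℂ := fun i a => U a i with hv
  have hUU : star U * U = 1 :=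
    Matrix.mem_unitaryGroup_iff'.mp (hH.eigenvectorUnitary).2
  have horthfull : ∀ i j, star (v i) ⬝ᵥ v j = (1 : Matrix (Fin n) (Fin n) ℂ) i j := by
    intro i j
    rw [← hUU, Matrix.mul_apply]
    simp only [dotProduct, Pi.star_apply, Matrix.star_apply, hv]
  have hunit : ∀ i, star (v i) ⬝ᵥ v i = 1 := by
    intro i; rw [horthfull i i, Matrix.one_apply_eq]
  have horth : ∀ i j, i ≠ j → star (v i) ⬝ᵥ v j = 0 := by
    intro i j hij; rw [horthfull i j, Matrix.one_apply_ne hij]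
  have hdecomp : ρ = ∑ i, ((ε i : ℝ) : ℂ) • vecMulVec (v i) (star (v i)) := by
    conv_lhs => rw [hH.spectral_theorem, Unitary.conjStarAlgAut_apply]
    ext a b
    rw [Matrix.sum_apply, Matrix.mul_apply]
    apply Finset.sum_congr rfl
    intro i _
    rw [Matrix.mul_diagonal]
    simp only [Function.comp_apply, Matrix.smul_apply, vecMulVec_apply, Pi.star_apply,
      Matrix.star_apply, smul_eq_mul, hv, Complex.star_def]
    rw [← hε, show ((RCLike.ofReal (ε i) : ℂ)) = ((ε i : ℝ) : ℂ) from rfl]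
    ring
  set s : Finset (Fin n) := Finset.univ.filter (fun i => 0 < ε i) with hs
  have hterm0 : ∀ i, ¬ 0 < ε i → ((ε i : ℝ) : ℂ) • vecMulVec (v i) (star (v i)) = 0 := by
    intro i hi
    have : ε i = 0 := le_antisymm (not_lt.mp hi) (hεnn i)
    rw [this, Complex.ofReal_zero, zero_smul]
  have hsfull : ρ = ∑ i ∈ s, ((ε i : ℝ) : ℂ) • vecMulVec (v i) (star (v i)) := by
    rw [hdecomp, hs]
    exact (Finset.sum_filter_of_ne (fun i _ h => by
      by_contra hc; exact h (hterm0 i hc))).symm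
  have hsne : s.Nonempty := by
    rw [Finset.nonempty_iff_ne_empty]
    intro hemp
    have : ρ = 0 := by rw [hsfull, hemp, Finset.sum_empty]
    have htr := hρ.2
    rw [this, Matrix.trace_zero] at htr
    exact zero_ne_one htr
  obtain ⟨m, p, ψ, hp, hψu, hsum, j, hroots, -⟩ :=
    fold_lemma hD hP v ε hunit horth s hsne (fun i hi => (Finset.mem_filter.mp hi).2)
  have hρψ : ρ = ∑ i, ((p i : ℝ) : ℂ) • vecMulVec (ψ i) (star (ψ i)) := by
    rw [hsfull, hsum]
  have hpsum : (∑ i, p i) = 1 := by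
    have htrterm : ∀ i : Fin m,
        (((p i : ℝ) : ℂ) • vecMulVec (ψ i) (star (ψ i))).trace = ((p i : ℝ) : ℂ) := by
      intro i
      rw [Matrix.trace_smul, Matrix.trace, smul_eq_mul]
      have : ∑ a, (vecMulVec (ψ i) (star (ψ i))).diag a = star (ψ i) ⬝ᵥ ψ i := by
        rw [dotProduct]
        apply Finset.sum_congr rfl
        intro a _
        simp only [Matrix.diag_apply, vecMulVec_apply, Pi.star_apply]
        ring
      rw [this, hψu i, mul_one]
    have htr : (((∑ i, p i : ℝ)) : ℂ) = 1 := by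
      rw [Complex.ofReal_sum, ← hρ.2, hρψ, Matrix.trace_sum]
      exact (Finset.sum_congr rfl (fun i _ => htrterm i)).symm
    exact_mod_cast htr
  exact ⟨m, p, ψ, hp, hpsum, hψu, hρψ, j, hroots⟩
end

section
/- Let P be a homogeneous multivariate polynomial of degree D ≥ 1 in n complex variables, and let ρ be a density matrix on ℂ^n. Suppose ρ = μ·ρ_L + (1−μ)·ω is an optimal zero-E decomposition: ρ_L ∈ Z, ω is a density matrix, 0 ≤ μ < 1, and for every decomposition ρ = λ·ρ_L' + (1−λ)·ω' with ρ_L' ∈ Z and ω' a density matrix one has λ ≤ μ. Then every unit vector v in the range (column space) of ω satisfies P(v) ≠ 0. -/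
open Matrix
open scoped ComplexOrder

/-- The set of density matrices expressible as a finite convex combination of rank-one
projections onto unit vectors annihilating `P`. -/
def ZeroSet {n : ℕ} (P : MvPolynomial (Fin n) ℂ) : Set (Matrix (Fin n) (Fin n) ℂ) :=
  { σ | ∃ (m : ℕ) (q : Fin m → ℝ) (v : Fin m → Fin n → ℂ),
      (∀ j, 0 ≤ q j) ∧ (∑ j, q j) = 1 ∧ (∀ j, star (v j) ⬝ᵥ v j = 1) ∧
      (∀ j, MvPolynomial.eval (v j) P = 0) ∧
      σ = ∑ j, ((q j : ℝ) : ℂ) • Matrix.vecMulVec (v j) (star (v j)) }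

lemma cs_aux {n : ℕ} (a b : Fin n → ℂ) :
    star (star a ⬝ᵥ b) * (star a ⬝ᵥ b) ≤ (star a ⬝ᵥ a) * (star b ⬝ᵥ b) := by
  let a' : EuclideanSpace ℂ (Fin n) := (WithLp.equiv 2 (Fin n → ℂ)).symm a
  let b' : EuclideanSpace ℂ (Fin n) := (WithLp.equiv 2 (Fin n → ℂ)).symm b
  have h1 : (inner ℂ a' b' : ℂ) = star a ⬝ᵥ b := by
    rw [dotProduct_comm]; exact EuclideanSpace.inner_toLp_toLp a b
  have h2 : (inner ℂ a' a' : ℂ) = star a ⬝ᵥ a := by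
    rw [dotProduct_comm]; exact EuclideanSpace.inner_toLp_toLp a a
  have h3 : (inner ℂ b' b' : ℂ) = star b ⬝ᵥ b := by
    rw [dotProduct_comm]; exact EuclideanSpace.inner_toLp_toLp b b
  have h4 : (inner ℂ a' a' : ℂ) = ((‖a'‖ ^ 2 : ℝ) : ℂ) := by
    rw [inner_self_eq_norm_sq_to_K]; norm_cast
  have h5 : (inner ℂ b' b' : ℂ) = ((‖b'‖ ^ 2 : ℝ) : ℂ) := by
    rw [inner_self_eq_norm_sq_to_K]; norm_cast
  have h6 : star (star a ⬝ᵥ b) * (star a ⬝ᵥ b)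
      = ((Complex.normSq (star a ⬝ᵥ b) : ℝ) : ℂ) := by
    rw [Complex.normSq_eq_conj_mul_self]; rfl
  rw [h6, ← h2, ← h3, h4, h5, ← Complex.ofReal_mul, Complex.real_le_real]
  have := norm_inner_le_norm (𝕜 := ℂ) a' b'
  have h7 : Complex.normSq (star a ⬝ᵥ b) = ‖(inner ℂ a' b' : ℂ)‖ ^ 2 := by
    rw [Complex.normSq_eq_norm_sq, h1]
  rw [h7]
  nlinarith [norm_nonneg a', norm_nonneg b', norm_nonneg (inner ℂ a' b' : ℂ)]

lemma vmv_mulVec {n : ℕ} (v x : Fin n → ℂ) :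
    vecMulVec v (star v) *ᵥ x = (star v ⬝ᵥ x) • v := by
  ext i
  simp [vecMulVec_apply, mulVec, dotProduct, Finset.mul_sum, mul_comm, mul_left_comm]

lemma vmv_quad {n : ℕ} (v x : Fin n → ℂ) :
    star x ⬝ᵥ (vecMulVec v (star v) *ᵥ x) = star (star v ⬝ᵥ x) * (star v ⬝ᵥ x) := by
  rw [vmv_mulVec, dotProduct_smul]
  have : star x ⬝ᵥ v = star (star v ⬝ᵥ x) := by
    simp [dotProduct, Finset.sum_comm, mul_comm]
  rw [smul_eq_mul, this, mul_comm]

lemma vmv_herm {n : ℕ} (v : Fin n → ℂ) : (vecMulVec v (star v)).IsHermitian := by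
  ext i j
  simp [Matrix.IsHermitian, conjTranspose_apply, vecMulVec_apply, mul_comm]

lemma vmv_trace {n : ℕ} (v : Fin n → ℂ) (hv : star v ⬝ᵥ v = 1) :
    (vecMulVec v (star v)).trace = 1 := by
  rw [← hv]
  simp [Matrix.trace, Matrix.diag, vecMulVec_apply, dotProduct, mul_comm]

lemma vmv_mem_zeroSet {n : ℕ} (P : MvPolynomial (Fin n) ℂ) (v : Fin n → ℂ)
    (hv : star v ⬝ᵥ v = 1) (hPv : MvPolynomial.eval v P = 0) :
    vecMulVec v (star v) ∈ ZeroSet P := by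
  refine ⟨1, fun _ => 1, fun _ => v, fun _ => zero_le_one, by simp, fun _ => hv, fun _ => hPv, by simp⟩

lemma zeroSet_combo {n : ℕ} (P : MvPolynomial (Fin n) ℂ)
    {σ τ : Matrix (Fin n) (Fin n) ℂ} (hσ : σ ∈ ZeroSet P) (hτ : τ ∈ ZeroSet P)
    {a b : ℝ} (ha : 0 ≤ a) (hb : 0 ≤ b) (hab : a + b = 1) :
    ((a : ℝ) : ℂ) • σ + ((b : ℝ) : ℂ) • τ ∈ ZeroSet P := by
  obtain ⟨m1, q1, v1, hq1, hs1, hv1, hP1, he1⟩ := hσ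
  obtain ⟨m2, q2, v2, hq2, hs2, hv2, hP2, he2⟩ := hτ
  refine ⟨m1 + m2, Fin.append (fun j => a * q1 j) (fun j => b * q2 j),
    Fin.append v1 v2, ?_, ?_, ?_, ?_, ?_⟩
  · intro j
    refine Fin.addCases (fun i => ?_) (fun i => ?_) j <;>
      simp only [Fin.append_left, Fin.append_right]
    · exact mul_nonneg ha (hq1 i)
    · exact mul_nonneg hb (hq2 i)
  · rw [Fin.sum_univ_add]
    simp only [Fin.append_left, Fin.append_right, ← Finset.mul_sum, hs1, hs2]
    linarith
  · intro j
    refine Fin.addCases (fun i => ?_) (fun i => ?_) j <;>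
      simp [Fin.append_left, Fin.append_right, hv1, hv2]
  · intro j
    refine Fin.addCases (fun i => ?_) (fun i => ?_) j <;>
      simp [Fin.append_left, Fin.append_right, hP1, hP2]
  · rw [Fin.sum_univ_add]
    simp only [Fin.append_left, Fin.append_right]
    rw [he1, he2, Finset.smul_sum, Finset.smul_sum]
    congr 1 <;> refine Finset.sum_congr rfl fun j _ => ?_ <;>
      push_cast <;> rw [smul_smul]

lemma real_mul_nonneg {r : ℝ} (hr : 0 ≤ r) {z : ℂ} (hz : 0 ≤ z) : 0 ≤ (r : ℂ) * z := by
  rw [Complex.le_def] at hz ⊢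
  simp only [Complex.zero_re, Complex.zero_im, Complex.mul_re, Complex.mul_im,
    Complex.ofReal_re, Complex.ofReal_im] at *
  constructor
  · nlinarith [hz.1, hz.2]
  · nlinarith [hz.2]

lemma dot_self_eq {n : ℕ} (a : Fin n → ℂ) :
    star a ⬝ᵥ a = ((∑ i, Complex.normSq (a i) : ℝ) : ℂ) := by
  push_cast
  simp [dotProduct, Complex.normSq_eq_conj_mul_self]

theorem stmt_12 {n : ℕ} (P : MvPolynomial (Fin n) ℂ) (D : ℕ) (hD : 1 ≤ D)
    (hP : P.IsHomogeneous D) (ρ : Matrix (Fin n) (Fin n) ℂ)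
    (hρ : IsDensityMatrix ρ) (μ : ℝ) (ρL ω : Matrix (Fin n) (Fin n) ℂ)
    (hρL : ρL ∈ ZeroSet P) (hω : IsDensityMatrix ω)
    (hμ0 : 0 ≤ μ) (hμ1 : μ < 1)
    (hdecomp : ρ = ((μ : ℝ) : ℂ) • ρL + ((1 - μ : ℝ) : ℂ) • ω)
    (hmax : ∀ (lam : ℝ) (ρL' ω' : Matrix (Fin n) (Fin n) ℂ),
      ρL' ∈ ZeroSet P → IsDensityMatrix ω' → 0 ≤ lam → lam ≤ 1 →
      ρ = ((lam : ℝ) : ℂ) • ρL' + ((1 - lam : ℝ) : ℂ) • ω' → lam ≤ μ) :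
    ∀ v : Fin n → ℂ, star v ⬝ᵥ v = 1 → v ∈ LinearMap.range ω.mulVecLin →
      MvPolynomial.eval v P ≠ 0 := by
  intro v hv hrange hPv
  obtain ⟨w, hw⟩ := hrange
  rw [Matrix.mulVecLin_apply] at hw
  have hωps : ω.PosSemidef := hω.1
  obtain ⟨S, hSps, hSS⟩ : ∃ S : Matrix (Fin n) (Fin n) ℂ, S.PosSemidef ∧ S * S = ω := by
    open scoped MatrixOrder in
    exact ⟨CFC.sqrt ω, (CFC.sqrt_nonneg ω).posSemidef, CFC.sqrt_mul_sqrt_self ω hωps.nonneg⟩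
  have hSH : Sᴴ = S := hSps.1
  set a := S *ᵥ w with ha
  have hva : v = S *ᵥ a := by rw [ha, Matrix.mulVec_mulVec, hSS, hw]
  -- the key dot product identities
  have hdot : ∀ x : Fin n → ℂ, star v ⬝ᵥ x = star a ⬝ᵥ (S *ᵥ x) := by
    intro x
    rw [hva, Matrix.star_mulVec, hSH, ← Matrix.dotProduct_mulVec]
  have hquadω : ∀ x : Fin n → ℂ, star x ⬝ᵥ (ω *ᵥ x) = star (S *ᵥ x) ⬝ᵥ (S *ᵥ x) := by
    intro x
    rw [Matrix.star_mulVec, hSH, ← Matrix.dotProduct_mulVec, Matrix.mulVec_mulVec, hSS]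
  set ca := ∑ i, Complex.normSq (a i) with hcadef
  have hca : star a ⬝ᵥ a = ((ca : ℝ) : ℂ) := dot_self_eq a
  have hane : a ≠ 0 := by
    intro h
    rw [h, Matrix.mulVec_zero] at hva
    rw [hva] at hv
    simp [dotProduct] at hv
  have hca0 : 0 < ca := by
    obtain ⟨i, hi⟩ := Function.ne_iff.mp hane
    exact Finset.sum_pos' (fun i _ => Complex.normSq_nonneg (a i))
      ⟨i, Finset.mem_univ i, by simpa [Complex.normSq_pos] using hi⟩
  set ε := min (1 / ca) (1 / 2) with hεdef
  have hε0 : 0 < ε := lt_min (by positivity) (by norm_num)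
  have hε1 : ε < 1 := lt_of_le_of_lt (min_le_right _ _) (by norm_num)
  have hεca : ε * ca ≤ 1 := by
    have := min_le_left (1 / ca) (1 / 2)
    calc ε * ca ≤ (1 / ca) * ca := by nlinarith
    _ = 1 := by field_simp
  set M := vecMulVec v (star v) with hMdef
  -- key quadratic bound
  have hkey : ∀ x : Fin n → ℂ, ((ε : ℝ) : ℂ) * (star x ⬝ᵥ (M *ᵥ x)) ≤ star x ⬝ᵥ (ω *ᵥ x) := by
    intro x
    set b := S *ᵥ x with hb
    set cb := ∑ i, Complex.normSq (b i) with hcbdef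
    have hcb : star b ⬝ᵥ b = ((cb : ℝ) : ℂ) := dot_self_eq b
    have hcb0 : 0 ≤ cb := Finset.sum_nonneg fun i _ => Complex.normSq_nonneg _
    have hcs := cs_aux a b
    rw [hca, hcb, ← Complex.ofReal_mul] at hcs
    have hnt : star (star a ⬝ᵥ b) * (star a ⬝ᵥ b)
        = ((Complex.normSq (star a ⬝ᵥ b) : ℝ) : ℂ) := by
      rw [Complex.normSq_eq_conj_mul_self]; rfl
    rw [hnt] at hcs
    have hcs' : Complex.normSq (star a ⬝ᵥ b) ≤ ca * cb := by exact_mod_cast hcs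
    rw [hMdef, vmv_quad, hdot x, ← hb, hnt, hquadω x, ← hb, hcb, ← Complex.ofReal_mul,
      Complex.real_le_real]
    nlinarith [Complex.normSq_nonneg (star a ⬝ᵥ b)]
  -- the matrix ω - ε M is PSD
  have hMH : Mᴴ = M := vmv_herm v
  have hsubps : (ω - ((ε : ℝ) : ℂ) • M).PosSemidef := by
    rw [Matrix.posSemidef_iff_dotProduct_mulVec]
    constructor
    · show (ω - ((ε : ℝ) : ℂ) • M)ᴴ = _
      rw [Matrix.conjTranspose_sub, Matrix.conjTranspose_smul, hMH, hωps.1.eq]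
      simp
    · intro x
      rw [Matrix.sub_mulVec, dotProduct_sub, Matrix.smul_mulVec,
        dotProduct_smul, smul_eq_mul, sub_nonneg]
      exact hkey x
  set ω' := (((1 - ε)⁻¹ : ℝ) : ℂ) • (ω - ((ε : ℝ) : ℂ) • M) with hω'def
  have hω'dens : IsDensityMatrix ω' := by
    constructor
    · rw [Matrix.posSemidef_iff_dotProduct_mulVec]
      constructor
      · show ω'ᴴ = ω'
        rw [hω'def, Matrix.conjTranspose_smul, hsubps.1.eq]
        simp
      · intro x
        rw [hω'def, Matrix.smul_mulVec, dotProduct_smul, smul_eq_mul]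
        exact real_mul_nonneg (inv_nonneg.mpr (by nlinarith)) (hsubps.dotProduct_mulVec_nonneg x)
    · have htr : (ω - ((ε : ℝ) : ℂ) • M).trace = ((1 - ε : ℝ) : ℂ) := by
        rw [Matrix.trace_sub, Matrix.trace_smul, hω.2, hMdef, vmv_trace v hv]
        push_cast [smul_eq_mul]; ring
      rw [hω'def, Matrix.trace_smul, htr, smul_eq_mul, ← Complex.ofReal_mul]
      rw [inv_mul_cancel₀ (by nlinarith)]
      norm_num
  set lam := μ + (1 - μ) * ε with hlamdef
  have hlam0 : 0 < lam := by nlinarith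
  have hlam1 : lam ≤ 1 := by nlinarith
  set ρL' := ((μ / lam : ℝ) : ℂ) • ρL + (((1 - μ) * ε / lam : ℝ) : ℂ) • M with hρL'def
  have hρL'mem : ρL' ∈ ZeroSet P := by
    refine zeroSet_combo P hρL (vmv_mem_zeroSet P v hv hPv) ?_ ?_ ?_
    · exact div_nonneg hμ0 hlam0.le
    · exact div_nonneg (by nlinarith) hlam0.le
    · rw [← add_div, ← hlamdef]
      exact div_self hlam0.ne'
  have hdec' : ρ = ((lam : ℝ) : ℂ) • ρL' + ((1 - lam : ℝ) : ℂ) • ω' := by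
    have e1 : ((lam : ℝ) : ℂ) * ((μ / lam : ℝ) : ℂ) = ((μ : ℝ) : ℂ) := by
      rw [← Complex.ofReal_mul]
      congr 1
      field_simp
    have e2 : ((lam : ℝ) : ℂ) * (((1 - μ) * ε / lam : ℝ) : ℂ) = (((1 - μ) * ε : ℝ) : ℂ) := by
      rw [← Complex.ofReal_mul]
      congr 1
      field_simp
    have e3 : ((1 - lam : ℝ) : ℂ) * (((1 - ε)⁻¹ : ℝ) : ℂ) = ((1 - μ : ℝ) : ℂ) := by
      rw [← Complex.ofReal_mul]
      congr 1
      have h1 : (1 - lam : ℝ) = (1 - μ) * (1 - ε) := by rw [hlamdef]; ring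
      rw [h1, mul_assoc, mul_inv_cancel₀ (by nlinarith : (1:ℝ) - ε ≠ 0), mul_one]
    rw [hdecomp, hρL'def, hω'def]
    rw [smul_add, smul_smul, smul_smul, smul_smul, e1, e2, e3, smul_sub, smul_smul,
      ← Complex.ofReal_mul]
    abel
  have hle := hmax lam ρL' ω' hρL'mem hω'dens hlam0.le hlam1 hdec'
  nlinarith
end

section
/- Let f be a nonnegative real-valued function on the unit vectors of ℂ^n and let E be its convex roof extension to density matrices, E(ρ) := inf over all finite pure-state ensembles {(p_i, ψ_i)} of ρ of Σ_i p_i f(ψ_i). Let ρ and π be density matrices with ρ ≠ π, and suppose k > 0 is such that σ := ρ + (k / D(ρ,π))·(ρ − π) is a density matrix. Then E(ρ) ≤ (D(ρ,π) / D(σ,π))·(E(σ) − E(π)) + E(π); in particular, if E(π) = 0 then E(ρ) ≤ (D(ρ,π) / D(σ,π))·E(σ). -/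
open Matrix
open scoped ComplexOrder

/-- The convex roof extension of a function `f` on unit vectors to density matrices:
the infimum of `∑ i, p i * f (ψ i)` over all finite pure-state ensembles of `ρ`. -/
noncomputable def convexRoof {n : ℕ} (f : (Fin n → ℂ) → ℝ)
    (ρ : Matrix (Fin n) (Fin n) ℂ) : ℝ :=
  sInf { x : ℝ | ∃ (m : ℕ) (p : Fin m → ℝ) (ψ : Fin m → Fin n → ℂ),
    (∀ i, 0 ≤ p i) ∧ (∑ i, p i) = 1 ∧ (∀ i, star (ψ i) ⬝ᵥ ψ i = 1) ∧
    ρ = ∑ i, ((p i : ℝ) : ℂ) • Matrix.vecMulVec (ψ i) (star (ψ i)) ∧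
    x = ∑ i, p i * f (ψ i) }

open Polynomial

lemma charpoly_conj_aux {n : ℕ} (U A : Matrix (Fin n) (Fin n) ℂ)
    (h1 : U * star U = 1) (h2 : star U * U = 1) :
    (U * A * star U).charpoly = A.charpoly := by
  have hmap : ((C : ℂ →+* ℂ[X]).mapMatrix U) * ((C : ℂ →+* ℂ[X]).mapMatrix (star U)) = 1 := by
    rw [← RingHom.map_mul, h1, RingHom.map_one]
  have key : charmatrix (U * A * star U)
      = ((C : ℂ →+* ℂ[X]).mapMatrix U) * charmatrix A * ((C : ℂ →+* ℂ[X]).mapMatrix (star U)) := by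
    unfold charmatrix
    rw [Matrix.mul_sub, Matrix.sub_mul]
    congr 1
    · rw [← (scalar_commute (X : ℂ[X]) (Commute.all X) (C.mapMatrix U)).eq, Matrix.mul_assoc,
        hmap, Matrix.mul_one]
    · simp [RingHom.map_mul]
  rw [Matrix.charpoly, Matrix.charpoly, key, det_mul, det_mul, mul_comm, ← mul_assoc, ← det_mul,
    ← RingHom.map_mul, h2, RingHom.map_one, det_one, one_mul]

lemma charpoly_diagonal' {n : ℕ} (d : Fin n → ℂ) :
    (diagonal d).charpoly = ∏ i, (X - C (d i)) := by
  have h : charmatrix (diagonal d) = diagonal (fun i => X - C (d i)) := by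
    ext i j
    by_cases h : i = j
    · subst h; simp [charmatrix_apply, diagonal_apply_eq]
    · simp [charmatrix_apply, diagonal_apply_ne _ h]
  rw [Matrix.charpoly, h, det_diagonal]

lemma roots_conj_diag {n : ℕ} (U : Matrix (Fin n) (Fin n) ℂ)
    (h1 : U * star U = 1) (h2 : star U * U = 1) (d : Fin n → ℂ) :
    (U * diagonal d * star U).charpoly.roots = Finset.univ.val.map d := by
  rw [charpoly_conj_aux U _ h1 h2, charpoly_diagonal']
  have : (∏ i, (X - C (d i))) = ((Finset.univ.val.map d).map (fun a => X - C a)).prod := by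
    rw [Multiset.map_map]
    rfl
  rw [this, roots_multiset_prod_X_sub_C]

lemma eig_multiset {n : ℕ} {A : Matrix (Fin n) (Fin n) ℂ} (hA : A.IsHermitian) :
    A.charpoly.roots = Finset.univ.val.map (fun i => ((hA.eigenvalues i : ℝ) : ℂ)) := by
  set U : Matrix (Fin n) (Fin n) ℂ := (IsHermitian.eigenvectorUnitary hA : Matrix (Fin n) (Fin n) ℂ) with hUdef
  have h1 : U * star U = 1 := (Matrix.mem_unitaryGroup_iff).mp (IsHermitian.eigenvectorUnitary hA).2
  have h2 : star U * U = 1 := (Matrix.mem_unitaryGroup_iff').mp (IsHermitian.eigenvectorUnitary hA).2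
  conv_lhs => rw [hA.spectral_theorem, Unitary.conjStarAlgAut_apply]
  rw [roots_conj_diag U h1 h2]
  rfl

lemma smul_spectral {n : ℕ} {A : Matrix (Fin n) (Fin n) ℂ} (hA : A.IsHermitian) (c : ℝ) :
    (c : ℂ) • A = (IsHermitian.eigenvectorUnitary hA : Matrix (Fin n) (Fin n) ℂ) *
      diagonal (fun i => ((c * hA.eigenvalues i : ℝ) : ℂ)) *
      star (IsHermitian.eigenvectorUnitary hA : Matrix (Fin n) (Fin n) ℂ) := by
  conv_lhs => rw [hA.spectral_theorem, Unitary.conjStarAlgAut_apply]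
  have harg : ((c : ℂ) • (RCLike.ofReal ∘ hA.eigenvalues) : Fin n → ℂ)
      = fun i => ((c * hA.eigenvalues i : ℝ) : ℂ) := by
    funext i
    simp only [Pi.smul_apply, Function.comp_apply, smul_eq_mul]
    push_cast
    rfl
  rw [← Matrix.smul_mul, ← Matrix.mul_smul, ← diagonal_smul, harg]

lemma sum_abs_eig_smul {n : ℕ} {A : Matrix (Fin n) (Fin n) ℂ} (hA : A.IsHermitian)
    {c : ℝ} (hc : 0 ≤ c) (hcA : ((c : ℂ) • A).IsHermitian) :
    ∑ i, |hcA.eigenvalues i| = c * ∑ i, |hA.eigenvalues i| := by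
  set U : Matrix (Fin n) (Fin n) ℂ := (IsHermitian.eigenvectorUnitary hA : Matrix (Fin n) (Fin n) ℂ) with hUdef
  have h1 : U * star U = 1 := (Matrix.mem_unitaryGroup_iff).mp (IsHermitian.eigenvectorUnitary hA).2
  have h2 : star U * U = 1 := (Matrix.mem_unitaryGroup_iff').mp (IsHermitian.eigenvectorUnitary hA).2
  have hroots : Finset.univ.val.map (fun i => ((hcA.eigenvalues i : ℝ) : ℂ))
      = Finset.univ.val.map (fun i => ((c * hA.eigenvalues i : ℝ) : ℂ)) := by
    rw [← eig_multiset hcA]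
    conv_lhs => rw [smul_spectral hA c]
    exact roots_conj_diag U h1 h2 _
  have habs := congrArg (fun s : Multiset ℂ => (s.map (‖·‖)).sum) hroots
  simp only [Multiset.map_map, Function.comp, Complex.norm_real, Real.norm_eq_abs] at habs
  have e1 : ∑ i, |hcA.eigenvalues i| = (Finset.univ.val.map (fun i => |hcA.eigenvalues i|)).sum := rfl
  have e2 : ∑ i, |hA.eigenvalues i| = (Finset.univ.val.map (fun i => |hA.eigenvalues i|)).sum := rfl
  rw [e1, e2, habs]
  have : (fun i => |c * hA.eigenvalues i|) = fun i => c * |hA.eigenvalues i| := by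
    funext i; rw [abs_mul, abs_of_nonneg hc]
  rw [this, Multiset.sum_map_mul_left]

lemma conj_diag_eq_sum {n : ℕ} (U : Matrix (Fin n) (Fin n) ℂ) (d : Fin n → ℂ) :
    U * diagonal d * star U
      = ∑ i, d i • vecMulVec (fun a => U a i) (star fun a => U a i) := by
  ext a b
  rw [Matrix.sum_apply, Matrix.mul_apply]
  refine Finset.sum_congr rfl fun j _ => ?_
  rw [Matrix.mul_diagonal]
  simp only [Matrix.smul_apply, vecMulVec_apply, Pi.star_apply, smul_eq_mul,
    Matrix.star_apply]
  ring

lemma herm_eq_zero {n : ℕ} {A : Matrix (Fin n) (Fin n) ℂ} (hA : A.IsHermitian)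
    (h : ∀ i, hA.eigenvalues i = 0) : A = 0 := by
  conv_lhs => rw [hA.spectral_theorem, Unitary.conjStarAlgAut_apply]
  have hd : diagonal (RCLike.ofReal ∘ hA.eigenvalues) = (0 : Matrix (Fin n) (Fin n) ℂ) := by
    rw [show (RCLike.ofReal ∘ hA.eigenvalues : Fin n → ℂ) = fun _ => 0 by
      funext i; simp [h i]]
    simp
  rw [hd, Matrix.mul_zero, Matrix.zero_mul]

lemma ensemble_exists {n : ℕ} {τ : Matrix (Fin n) (Fin n) ℂ}
    (hτ : τ.PosSemidef) (htr : τ.trace = 1) :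
    ∃ (m : ℕ) (p : Fin m → ℝ) (ψ : Fin m → Fin n → ℂ),
      (∀ i, 0 ≤ p i) ∧ (∑ i, p i) = 1 ∧ (∀ i, star (ψ i) ⬝ᵥ ψ i = 1) ∧
      τ = ∑ i, ((p i : ℝ) : ℂ) • Matrix.vecMulVec (ψ i) (star (ψ i)) := by
  set U : Matrix (Fin n) (Fin n) ℂ := (IsHermitian.eigenvectorUnitary hτ.1 : Matrix (Fin n) (Fin n) ℂ) with hUdef
  have h2 : star U * U = 1 := (Matrix.mem_unitaryGroup_iff').mp (IsHermitian.eigenvectorUnitary hτ.1).2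
  refine ⟨n, hτ.1.eigenvalues, fun i => fun a => U a i, hτ.eigenvalues_nonneg, ?_, ?_, ?_⟩
  · have h1 : τ.trace = ((∑ i, hτ.1.eigenvalues i : ℝ) : ℂ) := by
      rw [trace_eq_sum_roots_charpoly, eig_multiset hτ.1]
      show ∑ i, ((hτ.1.eigenvalues i : ℝ) : ℂ) = _
      push_cast
      rfl
    rw [htr] at h1
    exact_mod_cast h1.symm
  · intro i
    have : (star U * U) i i = 1 := by rw [h2, Matrix.one_apply_eq]
    rw [← this, Matrix.mul_apply]
    rfl
  · conv_lhs => rw [hτ.1.spectral_theorem, Unitary.conjStarAlgAut_apply]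
    rw [conj_diag_eq_sum]
    rfl

def roofSet {n : ℕ} (f : (Fin n → ℂ) → ℝ) (ρ : Matrix (Fin n) (Fin n) ℂ) : Set ℝ :=
  { x : ℝ | ∃ (m : ℕ) (p : Fin m → ℝ) (ψ : Fin m → Fin n → ℂ),
    (∀ i, 0 ≤ p i) ∧ (∑ i, p i) = 1 ∧ (∀ i, star (ψ i) ⬝ᵥ ψ i = 1) ∧
    ρ = ∑ i, ((p i : ℝ) : ℂ) • Matrix.vecMulVec (ψ i) (star (ψ i)) ∧
    x = ∑ i, p i * f (ψ i) }

lemma roofSet_nonempty {n : ℕ} (f : (Fin n → ℂ) → ℝ) {τ : Matrix (Fin n) (Fin n) ℂ}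
    (hτ : τ.PosSemidef) (htr : τ.trace = 1) : (roofSet f τ).Nonempty := by
  obtain ⟨m, p, ψ, hp, hs, hu, hd⟩ := ensemble_exists hτ htr
  exact ⟨∑ i, p i * f (ψ i), m, p, ψ, hp, hs, hu, hd, rfl⟩

lemma roofSet_lb {n : ℕ} (f : (Fin n → ℂ) → ℝ)
    (hf : ∀ ψ : Fin n → ℂ, star ψ ⬝ᵥ ψ = 1 → 0 ≤ f ψ)
    (τ : Matrix (Fin n) (Fin n) ℂ) : ∀ x ∈ roofSet f τ, 0 ≤ x := by
  rintro x ⟨m, p, ψ, hp, hs, hu, hd, rfl⟩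
  exact Finset.sum_nonneg fun i _ => mul_nonneg (hp i) (hf _ (hu i))

lemma combo_mem {n : ℕ} (f : (Fin n → ℂ) → ℝ) {σ π ρ : Matrix (Fin n) (Fin n) ℂ}
    {a b : ℝ} (ha : 0 ≤ a) (hb : 0 ≤ b) (hab : a + b = 1)
    (hρ : ρ = ((a : ℝ) : ℂ) • σ + ((b : ℝ) : ℂ) • π)
    {x y : ℝ} (hx : x ∈ roofSet f σ) (hy : y ∈ roofSet f π) :
    a * x + b * y ∈ roofSet f ρ := by
  obtain ⟨m1, p1, ψ1, hp1, hs1, hu1, hd1, rfl⟩ := hx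
  obtain ⟨m2, p2, ψ2, hp2, hs2, hu2, hd2, rfl⟩ := hy
  refine ⟨m1 + m2, Fin.append (fun i => a * p1 i) (fun i => b * p2 i), Fin.append ψ1 ψ2,
    ?_, ?_, ?_, ?_, ?_⟩
  · intro i
    refine Fin.addCases (fun j => ?_) (fun j => ?_) i
    · rw [Fin.append_left]; exact mul_nonneg ha (hp1 j)
    · rw [Fin.append_right]; exact mul_nonneg hb (hp2 j)
  · rw [Fin.sum_univ_add]
    simp only [Fin.append_left, Fin.append_right]
    rw [← Finset.mul_sum, ← Finset.mul_sum, hs1, hs2, mul_one, mul_one, hab]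
  · intro i
    refine Fin.addCases (fun j => ?_) (fun j => ?_) i
    · rw [Fin.append_left]; exact hu1 j
    · rw [Fin.append_right]; exact hu2 j
  · rw [hρ, hd1, hd2, Fin.sum_univ_add]
    simp only [Fin.append_left, Fin.append_right]
    rw [Finset.smul_sum, Finset.smul_sum]
    congr 1
    · refine Finset.sum_congr rfl fun i _ => ?_
      rw [smul_smul]
      congr 1
      push_cast
      ring
    · refine Finset.sum_congr rfl fun i _ => ?_
      rw [smul_smul]
      congr 1
      push_cast
      ring
  · rw [Fin.sum_univ_add]
    simp only [Fin.append_left, Fin.append_right]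
    rw [Finset.mul_sum, Finset.mul_sum]
    congr 1 <;> exact Finset.sum_congr rfl fun i _ => by ring

lemma roof_convex {n : ℕ} (f : (Fin n → ℂ) → ℝ)
    (hf : ∀ ψ : Fin n → ℂ, star ψ ⬝ᵥ ψ = 1 → 0 ≤ f ψ)
    {σ π ρ : Matrix (Fin n) (Fin n) ℂ}
    (hσd : σ.PosSemidef) (hσt : σ.trace = 1) (hπd : π.PosSemidef) (hπt : π.trace = 1)
    {a b : ℝ} (ha : 0 ≤ a) (hb : 0 ≤ b) (hab : a + b = 1)
    (hρ : ρ = ((a : ℝ) : ℂ) • σ + ((b : ℝ) : ℂ) • π) :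
    sInf (roofSet f ρ) ≤ a * sInf (roofSet f σ) + b * sInf (roofSet f π) := by
  have hneσ := roofSet_nonempty f hσd hσt
  have hneπ := roofSet_nonempty f hπd hπt
  have hbdd : BddBelow (roofSet f ρ) := ⟨0, fun x hx => roofSet_lb f hf ρ x hx⟩
  have key : ∀ ε : ℝ, 0 < ε →
      sInf (roofSet f ρ) ≤ a * sInf (roofSet f σ) + b * sInf (roofSet f π) + ε := by
    intro ε hε
    have hε' : 0 < ε / 2 := by positivity
    obtain ⟨x, hx, hxlt⟩ := Real.lt_sInf_add_pos hneσ hε'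
    obtain ⟨y, hy, hylt⟩ := Real.lt_sInf_add_pos hneπ hε'
    have h1 : sInf (roofSet f ρ) ≤ a * x + b * y :=
      csInf_le hbdd (combo_mem f ha hb hab hρ hx hy)
    have h2 : a * x ≤ a * (sInf (roofSet f σ) + ε / 2) :=
      mul_le_mul_of_nonneg_left hxlt.le ha
    have h3 : b * y ≤ b * (sInf (roofSet f π) + ε / 2) :=
      mul_le_mul_of_nonneg_left hylt.le hb
    nlinarith
  by_contra hcon
  push_neg at hcon
  have := key ((sInf (roofSet f ρ) - (a * sInf (roofSet f σ) + b * sInf (roofSet f π))) / 2)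
    (by linarith)
  linarith

theorem stmt_16 {n : ℕ} (f : (Fin n → ℂ) → ℝ)
    (hf : ∀ ψ : Fin n → ℂ, star ψ ⬝ᵥ ψ = 1 → 0 ≤ f ψ)
    (ρ π : Matrix (Fin n) (Fin n) ℂ)
    (hρ : IsDensityMatrix ρ) (hπ : IsDensityMatrix π) (hne : ρ ≠ π)
    (k : ℝ) (hk : 0 < k)
    (hσ : IsDensityMatrix (ρ + ((k / traceDist ρ π : ℝ) : ℂ) • (ρ - π))) :
    convexRoof f ρ ≤
      (traceDist ρ π / traceDist (ρ + ((k / traceDist ρ π : ℝ) : ℂ) • (ρ - π)) π) *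
        (convexRoof f (ρ + ((k / traceDist ρ π : ℝ) : ℂ) • (ρ - π)) - convexRoof f π) +
      convexRoof f π ∧
    (convexRoof f π = 0 →
      convexRoof f ρ ≤
        (traceDist ρ π / traceDist (ρ + ((k / traceDist ρ π : ℝ) : ℂ) • (ρ - π)) π) *
          convexRoof f (ρ + ((k / traceDist ρ π : ℝ) : ℂ) • (ρ - π))) := by
  have hρπ : (ρ - π).IsHermitian := hρ.1.1.sub hπ.1.1
  set D := traceDist ρ π with hDdef
  set σ := ρ + ((k / D : ℝ) : ℂ) • (ρ - π) with hσdef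
  have hDval : D = (1/2) * ∑ i, |hρπ.eigenvalues i| := by
    rw [hDdef, traceDist, dif_pos hρπ]
  have hDnonneg' : 0 ≤ ∑ i, |hρπ.eigenvalues i| :=
    Finset.sum_nonneg fun i _ => abs_nonneg _
  have hDpos : 0 < D := by
    rcases lt_or_eq_of_le hDnonneg' with h | h
    · rw [hDval]; linarith
    · exfalso
      apply hne
      have hz : ∀ i, hρπ.eigenvalues i = 0 := fun i =>
        abs_eq_zero.mp ((Finset.sum_eq_zero_iff_of_nonneg
          (fun i _ => abs_nonneg (hρπ.eigenvalues i))).mp h.symm i (Finset.mem_univ i))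
      exact sub_eq_zero.mp (herm_eq_zero hρπ hz)
  have hDne : D ≠ 0 := ne_of_gt hDpos
  have hDkpos : 0 < D + k := by linarith
  have hDkne : D + k ≠ 0 := ne_of_gt hDkpos
  -- σ - π
  have hcoef : (((D + k)/D : ℝ) : ℂ) = 1 + ((k / D : ℝ) : ℂ) := by
    push_cast
    field_simp
  have hsub : σ - π = (((D + k)/D : ℝ) : ℂ) • (ρ - π) := by
    rw [hσdef, hcoef]
    module
  have hherm2 : ((((D + k)/D : ℝ) : ℂ) • (ρ - π)).IsHermitian := by
    show _ = _
    rw [Matrix.conjTranspose_smul, hρπ.eq]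
    congr 1
    simp
  have hDσ : traceDist σ π = D + k := by
    rw [traceDist]
    simp only [hsub]
    rw [dif_pos hherm2, sum_abs_eig_smul hρπ (by positivity) hherm2]
    have h2D : ∑ i, |hρπ.eigenvalues i| = 2 * D := by rw [hDval]; ring
    rw [h2D]
    field_simp
  set a : ℝ := D / (D + k) with hadef
  set b : ℝ := k / (D + k) with hbdef
  have ha : 0 ≤ a := by positivity
  have hb : 0 ≤ b := by positivity
  have hab : a + b = 1 := by rw [hadef, hbdef]; field_simp
  have h1 : (a : ℂ) * ((k / D : ℝ) : ℂ) = (b : ℂ) := by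
    have hr : a * (k / D) = b := by rw [hadef, hbdef]; field_simp
    rw [← Complex.ofReal_mul, hr]
  have h2 : (a : ℂ) + (b : ℂ) = 1 := by
    rw [← Complex.ofReal_add, hab, Complex.ofReal_one]
  have hρcomb : ρ = ((a : ℝ) : ℂ) • σ + ((b : ℝ) : ℂ) • π := by
    have : ((a : ℝ) : ℂ) • σ + ((b : ℝ) : ℂ) • π = ρ := by
      calc ((a : ℝ) : ℂ) • σ + ((b : ℝ) : ℂ) • π
          = (a : ℂ) • ρ + ((a : ℂ) * ((k / D : ℝ) : ℂ)) • (ρ - π) + (b : ℂ) • π := by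
            rw [hσdef, smul_add, smul_smul]
        _ = (a : ℂ) • ρ + (b : ℂ) • (ρ - π) + (b : ℂ) • π := by rw [h1]
        _ = ((a : ℂ) + (b : ℂ)) • ρ := by rw [smul_sub, add_smul]; abel
        _ = ρ := by rw [h2, one_smul]
    exact this.symm
  have hmain : convexRoof f ρ ≤ a * convexRoof f σ + b * convexRoof f π := by
    show sInf (roofSet f ρ) ≤ a * sInf (roofSet f σ) + b * sInf (roofSet f π)
    exact roof_convex f hf hσ.1 hσ.2 hπ.1 hπ.2 ha hb hab hρcomb
  have hcoef2 : D / traceDist σ π = a := by rw [hDσ]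
  constructor
  · rw [hcoef2]
    have heq : a * (convexRoof f σ - convexRoof f π) + convexRoof f π
        = a * convexRoof f σ + b * convexRoof f π := by
      have hb' : b = 1 - a := by linarith
      rw [hb']; ring
    rw [heq]
    exact hmain
  · intro hEπ
    rw [hcoef2]
    calc convexRoof f ρ ≤ a * convexRoof f σ + b * convexRoof f π := hmain
      _ = a * convexRoof f σ := by rw [hEπ]; ring
end
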